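/- arXiv:2308.14535 — 9 statements merged into one kernel-verified Lean document; each statement's English description precedes it below -/
import Mathlib

section
/- Let D be a Krull domain and Σ a positive integer. Then there are only finitely many height-one prime ideals Q of D such that the residue ring D/Q has cardinality at most Σ. -/
open Polynomial

/-- A height-one prime ideal: a minimal nonzero prime. -/
def HeightOnePrime (D : Type*) [CommRing D] (P : Ideal D) : Prop :=
  P.IsPrime ∧ P ≠ ⊥ ∧ ∀ Q : Ideal D, Q.IsPrime → Q < P → Q = ⊥

/-- A Krull domain: localizations at height-one primes are DVRs, every nonzero element
lies in only finitely many height-one primes, and `D` is the intersection of its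
localizations at height-one primes inside its quotient field. -/
def IsKrullDomain (D : Type*) [CommRing D] [IsDomain D] : Prop :=
  (∀ P : Ideal D, ∀ h : HeightOnePrime D P,
      letI : P.IsPrime := h.1
      IsDiscreteValuationRing (Localization.AtPrime P)) ∧
  (∀ x : D, x ≠ 0 → {P : Ideal D | HeightOnePrime D P ∧ x ∈ P}.Finite) ∧
  (∀ x : FractionRing D,
    (∀ P : Ideal D, HeightOnePrime D P →
      ∃ a b : D, b ∉ P ∧ x * algebraMap D (FractionRing D) b = algebraMap D (FractionRing D) a) →
    ∃ d : D, x = algebraMap D (FractionRing D) d)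

/-- In a Krull domain there are only finitely many height-one primes `Q` with
`|D/Q| ≤ N`. -/
theorem stmt2 (D : Type*) [CommRing D] [IsDomain D] (hD : IsKrullDomain D)
    (Sig : ℕ) (hSig : 0 < Sig) :
    {Q : Ideal D | HeightOnePrime D Q ∧ Cardinal.mk (D ⧸ Q) ≤ (Sig : Cardinal)}.Finite := by
  obtain ⟨-, hfin, -⟩ := hD
  set n := Sig.factorial with hn
  have hnpos : 0 < n := Sig.factorial_pos
  by_cases hall : ∀ a : D, a ^ (n + 1) = a
  · -- D has no nonzero primes at all
    apply Set.Finite.subset Set.finite_empty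
    rintro Q ⟨⟨hQp, hQne, -⟩, -⟩
    exfalso
    obtain ⟨p, hpQ, hp0⟩ : ∃ p ∈ Q, p ≠ 0 := by
      by_contra h
      push_neg at h
      exact hQne (le_antisymm (fun x hx => h x hx) bot_le)
    have hpow : p * p ^ n = p * 1 := by
      rw [mul_one, ← pow_succ']
      exact hall p
    have hone : p ^ n = 1 := mul_left_cancel₀ hp0 hpow
    have : (1 : D) ∈ Q := hone ▸ Q.pow_mem_of_mem hpQ n hnpos
    exact hQp.ne_top (Q.eq_top_iff_one.mpr this)
  · push_neg at hall
    obtain ⟨a, ha⟩ := hall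
    have hx : a ^ (n + 1) - a ≠ 0 := sub_ne_zero.mpr ha
    apply Set.Finite.subset (hfin _ hx)
    rintro Q ⟨hQ, hcard⟩
    refine ⟨hQ, ?_⟩
    haveI : Q.IsPrime := hQ.1
    haveI : Finite (D ⧸ Q) := by
      rw [← Cardinal.lt_aleph0_iff_finite]
      exact lt_of_le_of_lt hcard (Cardinal.nat_lt_aleph0 Sig)
    letI : Fintype (D ⧸ Q) := Fintype.ofFinite _
    letI : Field (D ⧸ Q) := (Finite.isField_of_domain (D ⧸ Q)).toField
    have hqle : Fintype.card (D ⧸ Q) ≤ Sig := by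
      rwa [Cardinal.mk_fintype, Nat.cast_le] at hcard
    have hq2 : 1 < Fintype.card (D ⧸ Q) := Fintype.one_lt_card
    have hdvd : (Fintype.card (D ⧸ Q) - 1) ∣ n :=
      Nat.dvd_factorial (by omega) (by omega)
    set b := Ideal.Quotient.mk Q a with hb
    have hbpow : b ^ (n + 1) = b := by
      rcases eq_or_ne b 0 with h0 | h0
      · rw [h0, zero_pow (Nat.succ_ne_zero n)]
      · obtain ⟨k, hk⟩ := hdvd
        have h1 : b ^ (Fintype.card (D ⧸ Q) - 1) = 1 :=
          FiniteField.pow_card_sub_one_eq_one b h0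
        rw [pow_succ, hk, pow_mul, h1, one_pow, one_mul]
    have : Ideal.Quotient.mk Q (a ^ (n + 1) - a) = 0 := by
      rw [map_sub, map_pow, ← hb, hbpow, sub_self]
    exact Ideal.Quotient.eq_zero_iff_mem.mp this
end

section
/- Let k > 2 and 1 < n_1 ≤ ... ≤ n_k be integers, and let I ⊆ [n_1] × ... × [n_k]. Suppose that for every coordinate direction i ∈ {1,...,k} and every r ∈ [n_i], the intersection I ∩ H_i(r) equals H_{i,j}(r, T) for some j ≠ i and some T ⊆ [n_j] (i.e., every intersection of I with a (k−1)-dimensional coordinate hyperplane is a union of parallel (k−2)-dimensional coordinate hyperplanes within it). Then I = H_ℓ(S) for some ℓ ∈ {1,...,k} and S ⊆ [n_ℓ], i.e., I is a union of parallel (k−1)-dimensional coordinate hyperplanes. -/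
/-- If every intersection of `I ⊆ [n_1] × ⋯ × [n_k]` with a `(k-1)`-dimensional coordinate
hyperplane is a union of parallel `(k-2)`-dimensional coordinate hyperplanes, then `I` is a
union of parallel `(k-1)`-dimensional coordinate hyperplanes. -/
theorem stmt4 (k : ℕ) (hk : 2 < k) (n : Fin k → ℕ) (hn : ∀ i, 1 < n i) (hmono : Monotone n)
    (I : Set (∀ i : Fin k, Fin (n i)))
    (hI : ∀ (i : Fin k) (r : Fin (n i)), ∃ j : Fin k, j ≠ i ∧ ∃ T : Set (Fin (n j)),
      I ∩ {x | x i = r} = {x | x i = r ∧ x j ∈ T}) :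
    ∃ (ℓ : Fin k) (S : Set (Fin (n ℓ))), I = {x | x ℓ ∈ S} := by
  have x0 : ∀ i : Fin k, Fin (n i) := fun i => ⟨0, by have := hn i; omega⟩
  set i0 : Fin k := ⟨0, by omega⟩ with hi0
  by_cases hcase : ∀ r : Fin (n i0), (I ∩ {x | x i0 = r}).Nonempty →
      I ∩ {x | x i0 = r} = {x | x i0 = r}
  · refine ⟨i0, {r | ∃ x ∈ I, x i0 = r}, ?_⟩
    ext x
    constructor
    · intro hx; exact ⟨x, hx, rfl⟩
    · rintro ⟨y, hy, hy0⟩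
      have hne : (I ∩ {z | z i0 = x i0}).Nonempty := ⟨y, hy, hy0⟩
      have h1 := hcase (x i0) hne
      have h2 : x ∈ I ∩ {z | z i0 = x i0} := by rw [h1]; exact rfl
      exact h2.1
  · push_neg at hcase
    obtain ⟨r, hne, hnfull⟩ := hcase
    obtain ⟨j, hji, T, hT⟩ := hI i0 r
    -- T is nonempty
    have hTne : ∃ s, s ∈ T := by
      by_contra h
      push_neg at h
      obtain ⟨x, hx⟩ := hne
      rw [hT] at hx
      exact h _ hx.2
    -- T is not everything
    have hTnu : ∃ s', s' ∉ T := by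
      by_contra h
      push_neg at h
      apply hnfull
      rw [hT]
      ext x
      exact ⟨fun hx => hx.1, fun hx => ⟨hx, h _⟩⟩
    -- every j-slice points along i0
    have key1 : ∀ s : Fin (n j), ∃ U : Set (Fin (n i0)),
        I ∩ {x | x j = s} = {x | x j = s ∧ x i0 ∈ U} := by
      intro s
      obtain ⟨m, hmj, U, hU⟩ := hI j s
      by_cases hmi : m = i0
      · subst hmi; exact ⟨U, hU⟩
      · by_cases hsT : s ∈ T
        · refine ⟨Set.univ, ?_⟩
          have hUuniv : ∀ u : Fin (n m), u ∈ U := by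
            intro u
            set y := Function.update (Function.update (Function.update x0 i0 r) j s) m u
              with hy
            have hyi : y i0 = r := by
              rw [hy, Function.update_of_ne (Ne.symm hmi),
                Function.update_of_ne (Ne.symm hji), Function.update_self]
            have hyj : y j = s := by
              rw [hy, Function.update_of_ne (Ne.symm hmj), Function.update_self]
            have hym : y m = u := by rw [hy, Function.update_self]
            have hyI : y ∈ I := by
              have : y ∈ I ∩ {x | x i0 = r} := by
                rw [hT]; exact ⟨hyi, by rw [hyj]; exact hsT⟩
              exact this.1
            have h2 : y ∈ I ∩ {x | x j = s} := ⟨hyI, hyj⟩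
            rw [hU] at h2
            rw [← hym]; exact h2.2
          rw [hU]; ext x
          simp only [Set.mem_setOf_eq, Set.mem_univ, and_true]
          exact ⟨fun hx => hx.1, fun hx => ⟨hx, hUuniv _⟩⟩
        · refine ⟨∅, ?_⟩
          have hUe : ∀ u : Fin (n m), u ∉ U := by
            intro u hu
            set y := Function.update (Function.update (Function.update x0 i0 r) j s) m u
              with hy
            have hyi : y i0 = r := by
              rw [hy, Function.update_of_ne (Ne.symm hmi),
                Function.update_of_ne (Ne.symm hji), Function.update_self]
            have hyj : y j = s := by
              rw [hy, Function.update_of_ne (Ne.symm hmj), Function.update_self]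
            have hym : y m = u := by rw [hy, Function.update_self]
            have h2 : y ∈ I ∩ {x | x j = s} := by
              rw [hU]; exact ⟨hyj, by rw [hym]; exact hu⟩
            have h3 : y ∈ I ∩ {x | x i0 = r} := ⟨h2.1, hyi⟩
            rw [hT] at h3
            exact hsT (hyj ▸ h3.2)
          rw [hU]; ext x
          simp only [Set.mem_setOf_eq, Set.mem_empty_iff_false, and_false, iff_false]
          intro hx
          exact hUe _ hx.2
    choose U hAll using key1
    have hIU : ∀ x, x ∈ I ↔ x i0 ∈ U (x j) := by
      intro x
      constructor
      · intro hx
        have h2 : x ∈ I ∩ {y | y j = x j} := ⟨hx, rfl⟩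
        rw [hAll (x j)] at h2; exact h2.2
      · intro hx
        have h2 : x ∈ {y | y j = x j ∧ y i0 ∈ U (x j)} := ⟨rfl, hx⟩
        rw [← hAll (x j)] at h2; exact h2.1
    -- a third coordinate
    have hm3 : ∃ m : Fin k, m ≠ i0 ∧ m ≠ j := by
      by_contra h
      push_neg at h
      have h1 : (⟨1, by omega⟩ : Fin k) = j := h _ (by simp [hi0, Fin.ext_iff])
      have h2 : (⟨2, by omega⟩ : Fin k) = j := h _ (by simp [hi0, Fin.ext_iff])
      rw [← h1] at h2
      simp [Fin.ext_iff] at h2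
    obtain ⟨m, hmi, hmj⟩ := hm3
    obtain ⟨p, hpm, V, hVeq⟩ := hI m (x0 m)
    by_cases hpi : p = i0
    · subst hpi
      refine ⟨i0, V, ?_⟩
      ext x
      set y := Function.update x m (x0 m) with hy
      have hyi : y i0 = x i0 := by rw [hy, Function.update_of_ne (Ne.symm hmi)]
      have hyj : y j = x j := by rw [hy, Function.update_of_ne (Ne.symm hmj)]
      have hym : y m = x0 m := by rw [hy, Function.update_self]
      have hxy : x ∈ I ↔ y ∈ I := by rw [hIU x, hIU y, hyi, hyj]
      constructor
      · intro hx
        have h2 : y ∈ I ∩ {z | z m = x0 m} := ⟨hxy.mp hx, hym⟩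
        rw [hVeq] at h2
        have h3 := h2.2
        rw [hyi] at h3; exact h3
      · intro hx
        have h2 : y ∈ {z | z m = x0 m ∧ z i0 ∈ V} := ⟨hym, by rw [hyi]; exact hx⟩
        rw [← hVeq] at h2
        exact hxy.mpr h2.1
    · by_cases hpj : p = j
      · subst hpj
        refine ⟨p, V, ?_⟩
        ext x
        set y := Function.update x m (x0 m) with hy
        have hyi : y i0 = x i0 := by rw [hy, Function.update_of_ne (Ne.symm hmi)]
        have hyj : y p = x p := by rw [hy, Function.update_of_ne (Ne.symm hmj)]
        have hym : y m = x0 m := by rw [hy, Function.update_self]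
        have hxy : x ∈ I ↔ y ∈ I := by rw [hIU x, hIU y, hyi, hyj]
        constructor
        · intro hx
          have h2 : y ∈ I ∩ {z | z m = x0 m} := ⟨hxy.mp hx, hym⟩
          rw [hVeq] at h2
          have h3 := h2.2
          rw [hyj] at h3; exact h3
        · intro hx
          have h2 : y ∈ {z | z m = x0 m ∧ z p ∈ V} := ⟨hym, by rw [hyj]; exact hx⟩
          rw [← hVeq] at h2
          exact hxy.mpr h2.1
      · -- p is a fourth coordinate: I must be trivial
        by_cases hR : ∃ a b, a ∈ U b
        · obtain ⟨a, b, hab⟩ := hR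
          have hVuniv : ∀ v : Fin (n p), v ∈ V := by
            intro v
            set y := Function.update (Function.update (Function.update
              (Function.update x0 i0 a) j b) m (x0 m)) p v with hy
            have hyi : y i0 = a := by
              rw [hy, Function.update_of_ne (Ne.symm hpi), Function.update_of_ne (Ne.symm hmi),
                Function.update_of_ne (Ne.symm hji), Function.update_self]
            have hyj : y j = b := by
              rw [hy, Function.update_of_ne (Ne.symm hpj), Function.update_of_ne (Ne.symm hmj),
                Function.update_self]
            have hym : y m = x0 m := by
              rw [hy, Function.update_of_ne (Ne.symm hpm), Function.update_self]
            have hyp : y p = v := by rw [hy, Function.update_self]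
            have hyI : y ∈ I := by
              rw [hIU y, hyi, hyj]; exact hab
            have h2 : y ∈ I ∩ {z | z m = x0 m} := ⟨hyI, hym⟩
            rw [hVeq] at h2
            rw [← hyp]; exact h2.2
          refine ⟨i0, Set.univ, ?_⟩
          ext x
          simp only [Set.mem_setOf_eq, Set.mem_univ, iff_true]
          set z := Function.update x m (x0 m) with hz
          have hzi : z i0 = x i0 := by rw [hz, Function.update_of_ne (Ne.symm hmi)]
          have hzj : z j = x j := by rw [hz, Function.update_of_ne (Ne.symm hmj)]
          have hzm : z m = x0 m := by rw [hz, Function.update_self]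
          have h2 : z ∈ {w | w m = x0 m ∧ w p ∈ V} := ⟨hzm, hVuniv _⟩
          rw [← hVeq] at h2
          have h3 := (hIU z).mp h2.1
          rw [hzi, hzj] at h3
          exact (hIU x).mpr h3
        · push_neg at hR
          refine ⟨i0, ∅, ?_⟩
          ext x
          simp only [Set.mem_setOf_eq, Set.mem_empty_iff_false, iff_false]
          intro hx
          exact hR _ _ ((hIU x).mp hx)
end

section
/- Let k > 1 and 1 < n_1 ≤ ... ≤ n_k be integers. Let I ⊆ [n_1] × ... × [n_k] be a non-empty subset that is not of the form H_ℓ(S) for any ℓ ∈ {1,...,k} and S ⊆ [n_ℓ]. Then there exists a k-dimensional array M ∈ ℚ^{n_1 × ... × n_k} such that for every coordinate direction ℓ and every r ∈ [n_ℓ] the sum of the entries of M over the hyperplane H_ℓ(r) is 0, but the sum of the entries of M over I is nonzero. -/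
/-- If `I ⊆ [n_1] × ⋯ × [n_k]` is non-empty and not a union of parallel coordinate
hyperplanes `H_ℓ(S)`, then there is a rational array `M` all of whose coordinate-hyperplane
sums vanish, but whose sum over `I` does not vanish (i.e. `Z \ Z_I ≠ ∅`). -/
theorem stmt5 (k : ℕ) (hk : 1 < k) (n : Fin k → ℕ) (hn : ∀ i, 1 < n i) (hmono : Monotone n)
    (I : Finset (∀ i : Fin k, Fin (n i))) (hne : I.Nonempty)
    (hnotH : ¬ ∃ (ℓ : Fin k) (S : Finset (Fin (n ℓ))),
      I = Finset.univ.filter (fun x => x ℓ ∈ S)) :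
    ∃ M : (∀ i : Fin k, Fin (n i)) → ℚ,
      (∀ (ℓ : Fin k) (r : Fin (n ℓ)),
        ∑ x ∈ Finset.univ.filter (fun x => x ℓ = r), M x = 0) ∧
      ∑ x ∈ I, M x ≠ 0 := by
  by_contra hcon
  push_neg at hcon
  -- linear functionals
  let L : (Σ ℓ : Fin k, Fin (n ℓ)) → ((∀ i : Fin k, Fin (n i)) → ℚ) →ₗ[ℚ] ℚ := fun p =>
    { toFun := fun M => ∑ x ∈ Finset.univ.filter (fun x => x p.1 = p.2), M x
      map_add' := by intros; simp [Finset.sum_add_distrib]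
      map_smul' := by intros; simp [Finset.mul_sum] }
  let K : ((∀ i : Fin k, Fin (n i)) → ℚ) →ₗ[ℚ] ℚ :=
    { toFun := fun M => ∑ x ∈ I, M x
      map_add' := by intros; simp [Finset.sum_add_distrib]
      map_smul' := by intros; simp [Finset.mul_sum] }
  have hker : ⨅ p, LinearMap.ker (L p) ≤ LinearMap.ker K := by
    intro M hM
    simp only [Submodule.mem_iInf, LinearMap.mem_ker] at hM ⊢
    exact hcon M (fun ℓ r => hM ⟨ℓ, r⟩)
  obtain ⟨c, hc⟩ := (Submodule.mem_span_range_iff_exists_fun ℚ).1 (mem_span_of_iInf_ker_le_ker hker)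
  set f : ∀ ℓ : Fin k, Fin (n ℓ) → ℚ := fun ℓ r => c ⟨ℓ, r⟩ with hf
  have key : ∀ x : ∀ i : Fin k, Fin (n i), ∑ ℓ, f ℓ (x ℓ) = if x ∈ I then 1 else 0 := by
    intro x
    have h := LinearMap.congr_fun hc (Pi.single x (1:ℚ))
    simp only [LinearMap.coe_sum, Finset.sum_apply, LinearMap.smul_apply, smul_eq_mul,
      LinearMap.coe_mk, AddHom.coe_mk, L, K] at h
    rw [show (∑ y ∈ I, Pi.single x (1:ℚ) y) = if x ∈ I then 1 else 0 by
      simp [Pi.single_apply, Finset.sum_ite_eq']] at h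
    rw [← h, ← Finset.univ_sigma_univ, Finset.sum_sigma]
    apply Finset.sum_congr rfl
    intro ℓ _
    have inner : ∀ p : Fin (n ℓ), (∑ y ∈ Finset.univ.filter (fun y => y ℓ = p),
        Pi.single x (1:ℚ) y) = if x ℓ = p then 1 else 0 := fun p => by
      simp [Pi.single_apply, Finset.sum_ite_eq', Finset.mem_filter]
    simp only [inner, mul_ite, mul_one, mul_zero]
    simp [hf, Finset.sum_ite_eq']
  clear hc hker hcon
  let x0 : ∀ i : Fin k, Fin (n i) := fun i => ⟨0, by have := hn i; omega⟩
  have hupd : ∀ (y : ∀ i : Fin k, Fin (n i)) (ℓ : Fin k) (a : Fin (n ℓ)),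
      ∑ i, f i (Function.update y ℓ a i) = (∑ i, f i (y i)) - f ℓ (y ℓ) + f ℓ a := by
    intro y ℓ a
    rw [← Finset.add_sum_erase _ (fun i => f i (Function.update y ℓ a i)) (Finset.mem_univ ℓ),
        ← Finset.add_sum_erase _ (fun i => f i (y i)) (Finset.mem_univ ℓ)]
    have h2 : ∑ i ∈ Finset.univ.erase ℓ, f i (Function.update y ℓ a i)
        = ∑ i ∈ Finset.univ.erase ℓ, f i (y i) := by
      apply Finset.sum_congr rfl
      intro i hi
      rw [Function.update_of_ne (Finset.ne_of_mem_erase hi)]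
    rw [h2, Function.update_self]
    ring
  have hval : ∀ x : ∀ i : Fin k, Fin (n i),
      (∑ i, f i (x i)) = 0 ∨ (∑ i, f i (x i)) = 1 := by
    intro x; rw [key x]; split <;> simp
  have claim : ∀ ℓ m : Fin k, ℓ ≠ m → (∀ a b, f ℓ a = f ℓ b) ∨ (∀ a b, f m a = f m b) := by
    intro ℓ m hlm
    by_contra hcl
    push_neg at hcl
    obtain ⟨⟨a, b, hab⟩, ⟨cc, d, hcd⟩⟩ := hcl
    have hgval : ∀ (s : Fin (n ℓ)) (t : Fin (n m)),
        ∑ i, f i (Function.update (Function.update x0 ℓ s) m t i)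
          = ((∑ i, f i (x0 i)) - f ℓ (x0 ℓ) - f m (x0 m)) + f ℓ s + f m t := by
      intro s t
      rw [hupd, hupd, Function.update_of_ne (Ne.symm hlm)]
      ring
    have h1 := hval (Function.update (Function.update x0 ℓ a) m cc)
    have h2 := hval (Function.update (Function.update x0 ℓ a) m d)
    have h3 := hval (Function.update (Function.update x0 ℓ b) m cc)
    have h4 := hval (Function.update (Function.update x0 ℓ b) m d)
    rw [hgval] at h1 h2 h3 h4
    rcases h1 with h1|h1 <;> rcases h2 with h2|h2 <;> rcases h3 with h3|h3 <;>
      rcases h4 with h4|h4 <;>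
      first
        | exact hab (by linarith)
        | exact hcd (by linarith)
        | linarith
  have hconst : ∃ ℓ : Fin k, ∀ m, m ≠ ℓ → ∀ a b, f m a = f m b := by
    by_cases hex : ∃ ℓ : Fin k, ∃ a b, f ℓ a ≠ f ℓ b
    · obtain ⟨ℓ, a, b, hab⟩ := hex
      refine ⟨ℓ, fun m hm a' b' => ?_⟩
      rcases claim ℓ m (Ne.symm hm) with h | h
      · exact absurd (h a b) hab
      · exact h a' b'
    · push_neg at hex
      exact ⟨⟨0, by omega⟩, fun m _ a b => hex m a b⟩
  obtain ⟨ℓ, hconst⟩ := hconst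
  set C : ℚ := ∑ i ∈ Finset.univ.erase ℓ, f i (x0 i) with hC
  have hG : ∀ x : ∀ i : Fin k, Fin (n i), ∑ i, f i (x i) = f ℓ (x ℓ) + C := by
    intro x
    rw [← Finset.add_sum_erase _ (fun i => f i (x i)) (Finset.mem_univ ℓ), hC]
    congr 1
    exact Finset.sum_congr rfl fun i hi => hconst i (Finset.ne_of_mem_erase hi) _ _
  refine hnotH ⟨ℓ, Finset.univ.filter (fun r => f ℓ r + C = 1), ?_⟩
  ext x
  simp only [Finset.mem_filter, Finset.mem_univ, true_and]
  constructor
  · intro hx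
    have hk2 := key x
    rw [hG, if_pos hx] at hk2
    exact hk2
  · intro hx
    by_contra hxI
    have hk2 := key x
    rw [hG, if_neg hxI, hx] at hk2
    exact one_ne_zero hk2
end

section
/- Let k be a positive integer and 1 < n_1 ≤ ... ≤ n_k integers. Then there exists an array M ∈ ℚ^{n_1 × ... × n_k} such that the sum of the entries of M over every coordinate hyperplane H_ℓ(r) is zero, and for every subset I ⊆ [n_1] × ... × [n_k], the sum of the entries of M over I is zero only if I = H_ℓ(S) for some ℓ ∈ {1,...,k} and S ⊆ [n_ℓ]. -/
open Finset Function
/-- Generic combination: given witnesses against each set in `s`, find one element of `V`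
working for all of them simultaneously. -/
lemma gen_aux {ι : Type*} (V : (ι → ℚ) → Prop)
    (h0 : V (fun _ => 0))
    (hadd : ∀ M B (t : ℚ), V M → V B → V (fun x => M x + t * B x))
    (s : Finset (Finset ι)) (hw : ∀ I ∈ s, ∃ B, V B ∧ ∑ x ∈ I, B x ≠ 0) :
    ∃ M, V M ∧ ∀ I ∈ s, ∑ x ∈ I, M x ≠ 0 := by
  classical
  induction s using Finset.induction_on with
  | empty => exact ⟨_, h0, by simp⟩
  | @insert a u ha ih =>
    obtain ⟨M, hMV, hM⟩ := ih (fun I hI => hw I (mem_insert_of_mem hI))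
    obtain ⟨B, hBV, hB⟩ := hw a (mem_insert_self _ _)
    set T : Finset ℚ := (insert a u).image
      (fun J => if (∑ x ∈ J, B x) = 0 then 0 else -(∑ x ∈ J, M x)/(∑ x ∈ J, B x)) with hT
    obtain ⟨t, ht⟩ := Infinite.exists_notMem_finset T
    refine ⟨fun x => M x + t * B x, hadd _ _ _ hMV hBV, ?_⟩
    intro J hJ
    have hsum : ∑ x ∈ J, (M x + t * B x) = (∑ x ∈ J, M x) + t * (∑ x ∈ J, B x) := by
      rw [Finset.sum_add_distrib, Finset.mul_sum]
    rw [hsum]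
    by_cases hq : (∑ x ∈ J, B x) = 0
    · rcases mem_insert.1 hJ with rfl | hJu
      · exact absurd hq hB
      · simpa [hq] using hM J hJu
    · intro hcontra
      apply ht
      rw [hT]
      refine mem_image.2 ⟨J, hJ, ?_⟩
      rw [if_neg hq]
      field_simp
      linarith
lemma indep_aux {k : ℕ} {n : Fin k → ℕ} (f : (∀ i : Fin k, Fin (n i)) → ℚ)
    (t : Finset (Fin k))
    (hind : ∀ i ∈ t, ∀ (z : ∀ i : Fin k, Fin (n i)) (s : Fin (n i)),
      f (Function.update z i s) = f z) :
    ∀ x y, (∀ i, i ∉ t → x i = y i) → f x = f y := by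
  classical
  induction t using Finset.induction_on with
  | empty =>
    intro x y h
    congr 1
    funext i
    exact h i (by simp)
  | @insert a u ha ih =>
    intro x y h
    have h1 : f x = f (Function.update x a (y a)) :=
      (hind a (mem_insert_self _ _) x (y a)).symm
    rw [h1]
    apply ih (fun i hi z s => hind i (mem_insert_of_mem hi) z s)
    intro i hi
    by_cases hia : i = a
    · subst hia; simp
    · rw [Function.update_of_ne hia]
      exact h i (by simp [hia, hi])
lemma comb_aux {k : ℕ} (hk : 0 < k) {n : Fin k → ℕ} (hn : ∀ i, 0 < n i)
    (I : Finset (∀ i : Fin k, Fin (n i)))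
    (H : ∀ (ℓ m : Fin k), ℓ ≠ m → ∀ (x : ∀ i : Fin k, Fin (n i))
      (r r' : Fin (n ℓ)) (s s' : Fin (n m)),
      (if Function.update (Function.update x ℓ r) m s ∈ I then (1:ℚ) else 0)
      - (if Function.update (Function.update x ℓ r) m s' ∈ I then (1:ℚ) else 0)
      - (if Function.update (Function.update x ℓ r') m s ∈ I then (1:ℚ) else 0)
      + (if Function.update (Function.update x ℓ r') m s' ∈ I then (1:ℚ) else 0) = 0) :
    ∃ (ℓ : Fin k) (S : Finset (Fin (n ℓ))),
      I = Finset.univ.filter (fun x => x ℓ ∈ S) := by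
  classical
  set f : (∀ i : Fin k, Fin (n i)) → ℚ := fun y => if y ∈ I then 1 else 0 with hf
  have hv : ∀ y, f y = 0 ∨ f y = 1 := by
    intro y; rw [hf]; dsimp only; split_ifs <;> simp
  have hmemf : ∀ y, y ∈ I ↔ f y = 1 := by
    intro y; rw [hf]; dsimp only; split_ifs <;> simp_all
  set x₀ : ∀ i : Fin k, Fin (n i) := fun i => ⟨0, hn i⟩ with hx₀
  -- Step 1: differences in one coordinate are constant
  have hconst : ∀ (ℓ : Fin k) (r r' : Fin (n ℓ)) (x : ∀ i : Fin k, Fin (n i)),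
      f (update x ℓ r) - f (update x ℓ r')
        = f (update x₀ ℓ r) - f (update x₀ ℓ r') := by
    intro ℓ r r' x
    have := indep_aux (fun x => f (update x ℓ r) - f (update x ℓ r')) Finset.univ
      ?_ x x₀ (fun i hi => absurd (Finset.mem_univ i) hi)
    · exact this
    · intro i _ z s
      by_cases hiℓ : i = ℓ
      · subst hiℓ
        rw [Function.update_idem, Function.update_idem]
      · have hkey := H ℓ i (fun h => hiℓ h.symm) z r r' s (z i)
        have e1 : Function.update (Function.update z ℓ r) i (z i)
            = Function.update z ℓ r := by
          rw [show z i = (Function.update z ℓ r) i from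
            (Function.update_of_ne hiℓ _ _).symm, Function.update_eq_self]
        have e2 : Function.update (Function.update z ℓ r') i (z i)
            = Function.update z ℓ r' := by
          rw [show z i = (Function.update z ℓ r') i from
            (Function.update_of_ne hiℓ _ _).symm, Function.update_eq_self]
        have e3 : Function.update (Function.update z ℓ r) i s
            = Function.update (Function.update z i s) ℓ r := by
          rw [Function.update_comm hiℓ]
        have e4 : Function.update (Function.update z ℓ r') i s
            = Function.update (Function.update z i s) ℓ r' := by
          rw [Function.update_comm hiℓ]
        rw [e1, e2, e3, e4] at hkey
        linarith
  by_cases hD : ∀ (ℓ : Fin k) (r r' : Fin (n ℓ)),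
      f (update x₀ ℓ r) = f (update x₀ ℓ r')
  · -- all differences vanish : f is constant
    have hindall : ∀ (i : Fin k) (z : ∀ i : Fin k, Fin (n i)) (s : Fin (n i)),
        f (update z i s) = f z := by
      intro i z s
      have h1 := hconst i s (z i) z
      rw [Function.update_eq_self] at h1
      have h2 := hD i s (z i)
      linarith
    have hcst : ∀ x, f x = f x₀ :=
      fun x => indep_aux f Finset.univ (fun i _ => hindall i) x x₀
        (fun i hi => absurd (Finset.mem_univ i) hi)
    refine ⟨⟨0, hk⟩, if x₀ ∈ I then Finset.univ else ∅, ?_⟩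
    ext x
    have hx : x ∈ I ↔ x₀ ∈ I := by
      rw [hmemf, hmemf, hcst x]
    by_cases h0 : x₀ ∈ I <;> simp [h0, hx]
  · push_neg at hD
    obtain ⟨ℓ, r, r', hne⟩ := hD
    -- f (update x ℓ r) is constant in x
    have hfr : ∀ x, f (update x ℓ r) = f (update x₀ ℓ r) := by
      intro x
      have h1 := hconst ℓ r r' x
      rcases hv (update x ℓ r) with h2|h2 <;> rcases hv (update x ℓ r') with h3|h3 <;>
        rcases hv (update x₀ ℓ r) with h4|h4 <;> rcases hv (update x₀ ℓ r') with h5|h5 <;>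
        first | linarith | exact absurd (h4.trans h5.symm) hne
    have hfr' : ∀ x, f (update x ℓ r') = f (update x₀ ℓ r') := by
      intro x
      have h1 := hconst ℓ r r' x
      have h2 := hfr x
      linarith
    -- f is independent of every coordinate other than ℓ
    have hindep : ∀ m, m ≠ ℓ → ∀ (z : ∀ i : Fin k, Fin (n i)) (s : Fin (n m)),
        f (update z m s) = f z := by
      intro m hm z s
      have h1 := hconst m s (z m) z
      have h2 := hconst m s (z m) (update x₀ ℓ r)
      have e1 : Function.update (Function.update x₀ ℓ r) m s
          = Function.update (Function.update x₀ m s) ℓ r :=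
        Function.update_comm (fun h => hm h.symm) _ _ _
      have e2 : Function.update (Function.update x₀ ℓ r) m (z m)
          = Function.update (Function.update x₀ m (z m)) ℓ r :=
        Function.update_comm (fun h => hm h.symm) _ _ _
      have a1 := hfr (update x₀ m s)
      have a2 := hfr (update x₀ m (z m))
      rw [e1, e2] at h2
      rw [Function.update_eq_self] at h1
      linarith
    -- hence f x depends only on x ℓ
    have hdep : ∀ x, f x = f (update x₀ ℓ (x ℓ)) := by
      intro x
      apply indep_aux f (Finset.univ.erase ℓ)
      · intro i hi
        exact hindep i (Finset.ne_of_mem_erase hi)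
      · intro i hi
        have : i = ℓ := by
          by_contra hiℓ
          exact hi (Finset.mem_erase.2 ⟨hiℓ, Finset.mem_univ i⟩)
        subst this
        simp
    refine ⟨ℓ, Finset.univ.filter (fun s => Function.update x₀ ℓ s ∈ I), ?_⟩
    ext x
    simp only [Finset.mem_filter, Finset.mem_univ, true_and]
    rw [hmemf, hdep x, ← hmemf]
/-- There exists a rational array `M` on `[n_1] × ⋯ × [n_k]` all of whose
coordinate-hyperplane sums vanish, and such that the sum of `M` over a subset `I`
vanishes only if `I` is a union of parallel coordinate hyperplanes `H_ℓ(S)`. -/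
theorem stmt6 (k : ℕ) (hk : 0 < k) (n : Fin k → ℕ) (hn : ∀ i, 1 < n i) (hmono : Monotone n) :
    ∃ M : (∀ i : Fin k, Fin (n i)) → ℚ,
      (∀ (ℓ : Fin k) (r : Fin (n ℓ)),
        ∑ x ∈ Finset.univ.filter (fun x => x ℓ = r), M x = 0) ∧
      ∀ I : Finset (∀ i : Fin k, Fin (n i)), ∑ x ∈ I, M x = 0 →
        ∃ (ℓ : Fin k) (S : Finset (Fin (n ℓ))),
          I = Finset.univ.filter (fun x => x ℓ ∈ S) := by
  classical
  have hn0 : ∀ i, 0 < n i := fun i => Nat.zero_lt_of_lt (hn i)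
  set V : ((∀ i : Fin k, Fin (n i)) → ℚ) → Prop := fun M =>
    ∀ (ℓ : Fin k) (r : Fin (n ℓ)),
      ∑ x ∈ Finset.univ.filter (fun x => x ℓ = r), M x = 0 with hV
  have h0 : V (fun _ => 0) := by intro ℓ r; simp
  have hadd : ∀ M B (t : ℚ), V M → V B → V (fun x => M x + t * B x) := by
    intro M B t hM hB ℓ r
    rw [Finset.sum_add_distrib, ← Finset.mul_sum, hM ℓ r, hB ℓ r, mul_zero, add_zero]
  set bad : Finset (Finset (∀ i : Fin k, Fin (n i))) :=
    Finset.univ.filter (fun I => ¬ ∃ (ℓ : Fin k) (S : Finset (Fin (n ℓ))),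
      I = Finset.univ.filter (fun x => x ℓ ∈ S)) with hbad
  have hw : ∀ I ∈ bad, ∃ B, V B ∧ ∑ x ∈ I, B x ≠ 0 := by
    intro I hI
    rw [hbad, Finset.mem_filter] at hI
    by_contra hB
    push_neg at hB
    apply hI.2
    apply comb_aux hk hn0 I
    intro ℓ m hlm x r r' s s'
    set p : Fin (n ℓ) → Fin (n m) → (∀ i : Fin k, Fin (n i)) :=
      fun a b => Function.update (Function.update x ℓ a) m b with hp
    set B : (∀ i : Fin k, Fin (n i)) → ℚ := fun y =>
      (if y = p r s then 1 else 0) - (if y = p r s' then 1 else 0)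
      - (if y = p r' s then 1 else 0) + (if y = p r' s' then 1 else 0) with hBdef
    have hpj : ∀ a b (j : Fin k), j ≠ ℓ → j ≠ m → p a b j = x j := by
      intro a b j hjl hjm
      rw [hp]
      dsimp only
      rw [Function.update_of_ne hjm, Function.update_of_ne hjl]
    have hpm : ∀ a b, p a b m = b := by intro a b; rw [hp]; simp
    have hpl : ∀ a b, p a b ℓ = a := by
      intro a b; rw [hp]; dsimp only
      rw [Function.update_of_ne hlm, Function.update_self]
    have hBsum : ∀ (u : Finset (∀ i : Fin k, Fin (n i))),
        ∑ y ∈ u, B y = (if p r s ∈ u then (1:ℚ) else 0)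
          - (if p r s' ∈ u then 1 else 0) - (if p r' s ∈ u then 1 else 0)
          + (if p r' s' ∈ u then 1 else 0) := by
      intro u
      rw [hBdef]
      dsimp only
      rw [Finset.sum_add_distrib, Finset.sum_sub_distrib, Finset.sum_sub_distrib]
      rw [Finset.sum_ite_eq' u (p r s), Finset.sum_ite_eq' u (p r s'),
        Finset.sum_ite_eq' u (p r' s), Finset.sum_ite_eq' u (p r' s')]
    have hBV : V B := by
      intro j t
      rw [hBsum]
      simp only [Finset.mem_filter, Finset.mem_univ, true_and]
      by_cases hjm : j = m
      · subst hjm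
        simp only [hpm]
        ring
      · by_cases hjl : j = ℓ
        · subst hjl
          simp only [hpl]
          ring
        · simp only [hpj _ _ j hjl hjm]
          ring
    have := hB B hBV
    rw [hBsum I] at this
    exact this
  obtain ⟨M, hMV, hM⟩ := gen_aux V h0 hadd bad hw
  refine ⟨M, hMV, ?_⟩
  intro I hsum
  by_contra hni
  exact hM I (by rw [hbad]; exact Finset.mem_filter.2 ⟨Finset.mem_univ I, hni⟩) hsum
end

section
/- Let k, q > 1 and 1 < n_1 ≤ ... ≤ n_k be integers. Then there exists a q-tuple of arrays (M_1, ..., M_q), each in ℚ^{n_1 × ... × n_k} with all entries positive integers, such that: (a) for every coordinate hyperplane H_ℓ(r), the sums Σ_{m ∈ H_ℓ(r)} (M_s)_m are equal for all s ∈ {1,...,q}; and (b) whenever non-empty subsets I_1, ..., I_q ⊆ [n_1] × ... × [n_k] satisfy Σ_{m ∈ I_s} (M_s)_m = Σ_{m ∈ I_t} (M_t)_m for all s, t, then I_1 = ... = I_q and this common set equals H_ℓ(S) for some ℓ ∈ {1,...,k} and S ⊆ [n_ℓ]. -/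
lemma digit5 : ∀ (M : ℕ) (c : ℕ → ℤ), (∀ i, |c i| ≤ 2) →
    (∑ i ∈ Finset.range M, 5 ^ i * c i) = 0 → ∀ i < M, c i = 0 := by
  intro M
  induction M with
  | zero => intro c _ _ i hi; omega
  | succ M ih =>
    intro c hc hsum i hi
    rw [Finset.sum_range_succ'] at hsum
    simp only [pow_succ, pow_zero, one_mul] at hsum
    have h5 : (5:ℤ) ∣ c 0 := by
      refine ⟨-∑ i ∈ Finset.range M, 5 ^ i * c (i + 1), ?_⟩
      have : ∑ i ∈ Finset.range M, 5 ^ i * 5 * c (i + 1)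
          = 5 * ∑ i ∈ Finset.range M, 5 ^ i * c (i + 1) := by
        rw [Finset.mul_sum]; congr 1; ext j; ring
      rw [this] at hsum; linarith
    have hc0 : c 0 = 0 := by
      have hb := abs_le.mp (hc 0)
      omega
    have hrest : ∑ i ∈ Finset.range M, 5 ^ i * c (i + 1) = 0 := by
      have : ∑ i ∈ Finset.range M, 5 ^ i * 5 * c (i + 1)
          = 5 * ∑ i ∈ Finset.range M, 5 ^ i * c (i + 1) := by
        rw [Finset.mul_sum]; congr 1; ext j; ring
      rw [this, hc0] at hsum
      omega
    rcases Nat.eq_zero_or_pos i with h0 | h0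
    · rw [h0]; exact hc0
    · have := ih (fun j => c (j + 1)) (fun j => hc (j + 1)) hrest (i - 1) (by omega)
      simpa [Nat.sub_add_cancel h0] using this

lemma chainlem {k : ℕ} {n : Fin k → ℕ} {β : Sort*} (g : (∀ i, Fin (n i)) → β)
    (m m' : ∀ i, Fin (n i))
    (h : ∀ j, m j = m' j ∨ ∀ (x : ∀ i, Fin (n i)) v, g (Function.update x j v) = g x) :
    g m = g m' := by
  classical
  have key : ∀ s : Finset (Fin k), g (fun i => if i ∈ s then m i else m' i) = g m' := by
    intro s
    induction s using Finset.induction_on with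
    | empty => congr 1
    | @insert j s hj ihs =>
      have hupd : (fun i => if i ∈ insert j s then m i else m' i)
          = Function.update (fun i => if i ∈ s then m i else m' i) j (m j) := by
        funext i
        by_cases hij : i = j
        · subst hij; simp [Function.update_self]
        · simp [Function.update_of_ne hij, Finset.mem_insert, hij]
      rw [hupd]
      rcases h j with heq | hinv
      · have : Function.update (fun i => if i ∈ s then m i else m' i) j (m j)
            = (fun i => if i ∈ s then m i else m' i) := by
          funext i
          by_cases hij : i = j
          · subst hij; simp [Function.update_self, heq]
          · simp [Function.update_of_ne hij]
        rw [this]; exact ihs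
      · rw [hinv]; exact ihs
  have := key Finset.univ
  simpa using this

section Boxes
variable {k : ℕ} {n : Fin k → ℕ}

def BoxIdx (k : ℕ) (n : Fin k → ℕ) : Type :=
  Σ ℓ1 : Fin k, Σ ℓ2 : Fin k, ((∀ i, Fin (n i)) × Fin (n ℓ1) × Fin (n ℓ2))

instance : Fintype (BoxIdx k n) := by unfold BoxIdx; infer_instance
instance : DecidableEq (BoxIdx k n) := by unfold BoxIdx; exact Sigma.instDecidableEqSigma

def boxFn (θ : BoxIdx k n) (x : ∀ i, Fin (n i)) : ℤ :=
  if θ.1 = θ.2.1 then 0 else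
    (if x = θ.2.2.1 then 1 else 0)
    - (if x = Function.update θ.2.2.1 θ.1 θ.2.2.2.1 then 1 else 0)
    - (if x = Function.update θ.2.2.1 θ.2.1 θ.2.2.2.2 then 1 else 0)
    + (if x = Function.update (Function.update θ.2.2.1 θ.1 θ.2.2.2.1) θ.2.1 θ.2.2.2.2 then 1 else 0)

lemma sum_boxFn (I : Finset (∀ i, Fin (n i))) (θ : BoxIdx k n) :
    ∑ x ∈ I, boxFn θ x =
      if θ.1 = θ.2.1 then 0 else
        (if θ.2.2.1 ∈ I then 1 else 0)
        - (if Function.update θ.2.2.1 θ.1 θ.2.2.2.1 ∈ I then 1 else 0)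
        - (if Function.update θ.2.2.1 θ.2.1 θ.2.2.2.2 ∈ I then 1 else 0)
        + (if Function.update (Function.update θ.2.2.1 θ.1 θ.2.2.2.1) θ.2.1 θ.2.2.2.2 ∈ I then 1 else 0) := by
  classical
  by_cases h : θ.1 = θ.2.1
  · simp [boxFn, h]
  · simp only [boxFn, if_neg h]
    rw [Finset.sum_add_distrib, Finset.sum_sub_distrib, Finset.sum_sub_distrib]
    rw [Finset.sum_ite_eq' I, Finset.sum_ite_eq' I, Finset.sum_ite_eq' I, Finset.sum_ite_eq' I]

lemma abs_sum_boxFn (I : Finset (∀ i, Fin (n i))) (θ : BoxIdx k n) :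
    |∑ x ∈ I, boxFn θ x| ≤ 2 := by
  rw [sum_boxFn]
  split_ifs <;> simp_all <;> omega

end Boxes

lemma filter_sum_boxFn {k : ℕ} {n : Fin k → ℕ} (θ : BoxIdx k n) (ℓ : Fin k) (S : Finset (Fin (n ℓ))) :
    ∑ x ∈ Finset.univ.filter (fun x => x ℓ ∈ S), boxFn θ x = 0 := by
  classical
  rw [sum_boxFn]
  by_cases h : θ.1 = θ.2.1
  · simp [h]
  · simp only [if_neg h]
    obtain ⟨ℓ1, ℓ2, m, r, u⟩ := θ
    simp only at h ⊢
    have hmem : ∀ p : ∀ i, Fin (n i), p ∈ Finset.univ.filter (fun x => x ℓ ∈ S) ↔ p ℓ ∈ S := by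
      intro p; simp
    simp only [hmem]
    by_cases h1 : ℓ = ℓ1
    · subst h1
      simp only [Function.update_of_ne h, Function.update_self]
      ring
    · by_cases h2 : ℓ = ℓ2
      · subst h2
        simp only [Function.update_of_ne h1, Function.update_self]
        ring
      · simp only [Function.update_of_ne h1, Function.update_of_ne h2]
        ring

lemma box_zero_hyperplane {k : ℕ} {n : Fin k → ℕ} (hk : 0 < k) (hn : ∀ i, 0 < n i)
    (I : Finset (∀ i, Fin (n i)))
    (hbox : ∀ θ : BoxIdx k n, ∑ x ∈ I, boxFn θ x = 0) :
    ∃ (ℓ : Fin k) (S : Finset (Fin (n ℓ))),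
      I = Finset.univ.filter (fun x => x ℓ ∈ S) := by
  classical
  set f : (∀ i, Fin (n i)) → ℤ := fun x => if x ∈ I then 1 else 0 with hf
  have hval : ∀ y, f y = 0 ∨ f y = 1 := by
    intro y; by_cases h : y ∈ I <;> simp [hf, h]
  have hbox' : ∀ (ℓ1 ℓ2 : Fin k), ℓ1 ≠ ℓ2 → ∀ (m : ∀ i, Fin (n i)) (r : Fin (n ℓ1)) (u : Fin (n ℓ2)),
      f m - f (Function.update m ℓ1 r) - f (Function.update m ℓ2 u)
        + f (Function.update (Function.update m ℓ1 r) ℓ2 u) = 0 := by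
    intro ℓ1 ℓ2 hne m r u
    have := (sum_boxFn I ⟨ℓ1, ℓ2, m, r, u⟩).symm.trans (hbox _)
    simp only [if_neg hne] at this
    simpa [hf] using this
  -- Δ-invariance
  have hdelta : ∀ (ℓ : Fin k) (a b : Fin (n ℓ)) (m m' : ∀ i, Fin (n i)),
      f (Function.update m ℓ b) - f (Function.update m ℓ a)
        = f (Function.update m' ℓ b) - f (Function.update m' ℓ a) := by
    intro ℓ a b m m'
    refine chainlem (fun z => f (Function.update z ℓ b) - f (Function.update z ℓ a)) m m' ?_
    intro j
    right
    intro x v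
    by_cases hj : j = ℓ
    · subst hj
      rw [Function.update_idem, Function.update_idem]
    · have h1 := hbox' j ℓ hj x v b
      have h2 := hbox' j ℓ hj x v a
      have e1 : Function.update (Function.update x j v) ℓ b
          = Function.update (Function.update x j v) ℓ b := rfl
      linarith
  -- invariance predicate
  have hinv_of : ∀ ℓ : Fin k, (∀ (a b : Fin (n ℓ)) (m : ∀ i, Fin (n i)),
      f (Function.update m ℓ b) = f (Function.update m ℓ a)) →
      ∀ (m : ∀ i, Fin (n i)) (v : Fin (n ℓ)), f (Function.update m ℓ v) = f m := by
    intro ℓ h m v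
    have := h (m ℓ) v m
    rwa [Function.update_eq_self] at this
  -- dichotomy: exists ℓ such that all other coordinates are invariant
  have key : ∃ ℓ : Fin k, ∀ j : Fin k, j ≠ ℓ →
      ∀ (m : ∀ i, Fin (n i)) (v : Fin (n j)), f (Function.update m j v) = f m := by
    by_cases hex : ∃ (ℓ : Fin k) (m : ∀ i, Fin (n i)) (v : Fin (n ℓ)),
        f (Function.update m ℓ v) ≠ f m
    · obtain ⟨ℓ, m, v, hm⟩ := hex
      refine ⟨ℓ, ?_⟩
      intro j hj m' v'
      by_contra hm'
      -- two noisy coordinates ℓ ≠ j : contradiction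
      have hΔℓ : f (Function.update m ℓ v) - f (Function.update m ℓ (m ℓ)) ≠ 0 := by
        rw [Function.update_eq_self]; omega
      have hΔj : f (Function.update m' j v') - f (Function.update m' j (m' j)) ≠ 0 := by
        rw [Function.update_eq_self]; omega
      set a : Fin (n ℓ) := m ℓ
      set a' : Fin (n j) := m' j
      set p : ∀ i, Fin (n i) := Function.update (Function.update m' j a') ℓ a with hp
      have hpa : Function.update p ℓ a = p := by
        rw [hp, Function.update_idem]
      have hpa' : Function.update p j a' = p := by
        rw [hp, Function.update_comm (Ne.symm hj), Function.update_idem]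
      have hα : f (Function.update p ℓ v) - f p ≠ 0 := by
        have := hdelta ℓ a v p m
        rw [hpa] at this
        omega
      have hβ : f (Function.update p j v') - f p ≠ 0 := by
        have := hdelta j a' v' p m'
        rw [hpa'] at this
        omega
      have hb := hbox' ℓ j (fun h => hj h.symm) p v v'
      have v0 := hval p
      have v1 := hval (Function.update p ℓ v)
      have v2 := hval (Function.update p j v')
      have v3 := hval (Function.update (Function.update p ℓ v) j v')
      omega
    · push_neg at hex
      refine ⟨⟨0, hk⟩, ?_⟩
      intro j _ m v
      exact hex j m v
  obtain ⟨ℓ, hinv⟩ := key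
  set z : ∀ i, Fin (n i) := fun i => ⟨0, hn i⟩ with hz
  refine ⟨ℓ, Finset.univ.filter (fun r => Function.update z ℓ r ∈ I), ?_⟩
  ext x
  have hfx : f x = f (Function.update z ℓ (x ℓ)) := by
    refine chainlem f x (Function.update z ℓ (x ℓ)) ?_
    intro j
    by_cases hj : j = ℓ
    · subst hj
      left
      rw [Function.update_self]
    · right
      intro y v
      exact hinv j hj y v
  simp only [Finset.mem_filter, Finset.mem_univ, true_and]
  constructor
  · intro hx
    have : f x = 1 := by simp [hf, hx]
    have : f (Function.update z ℓ (x ℓ)) = 1 := by omega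
    by_contra hc
    simp [hf, hc] at this
  · intro hx
    have : f (Function.update z ℓ (x ℓ)) = 1 := by simp [hf, hx]
    have : f x = 1 := by omega
    by_contra hc
    simp [hf, hc] at this

lemma digit5Fin (T : ℕ) (c : Fin T → ℤ) (h : ∀ i, |c i| ≤ 2)
    (hs : (∑ i : Fin T, 5 ^ (i : ℕ) * c i) = 0) : ∀ i, c i = 0 := by
  classical
  set c' : ℕ → ℤ := fun j => if hj : j < T then c ⟨j, hj⟩ else 0 with hc'
  have h' : ∀ j, |c' j| ≤ 2 := by
    intro j
    by_cases hj : j < T <;> simp [hc', hj]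
    · exact h _
  have hs' : (∑ j ∈ Finset.range T, 5 ^ j * c' j) = 0 := by
    rw [← Fin.sum_univ_eq_sum_range (fun j => 5 ^ j * c' j) T]
    rw [← hs]
    apply Finset.sum_congr rfl
    intro i _
    simp [hc', i.isLt]
  intro i
  have := digit5 T c' h' hs' i.val i.isLt
  simpa [hc', i.isLt] using this

lemma pow5_sum_inj {α : Type*} [Fintype α] [DecidableEq α] (I J : Finset α)
    (h : ∑ x ∈ I, (5:ℤ) ^ ((Fintype.equivFin α x : ℕ)) =
      ∑ x ∈ J, (5:ℤ) ^ ((Fintype.equivFin α x : ℕ))) : I = J := by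
  classical
  set e := Fintype.equivFin α with he
  have key : ∀ K : Finset α, ∑ i : Fin (Fintype.card α), (if e.symm i ∈ K then (5:ℤ) ^ (i:ℕ) else 0)
      = ∑ x ∈ K, (5:ℤ) ^ ((e x : ℕ)) := by
    intro K
    rw [← Equiv.sum_comp e (fun i => if e.symm i ∈ K then (5:ℤ) ^ (i:ℕ) else 0)]
    simp only [Equiv.symm_apply_apply]
    rw [Finset.sum_ite_mem, Finset.univ_inter]
  set c : Fin (Fintype.card α) → ℤ :=
    fun i => (if e.symm i ∈ I then 1 else 0) - (if e.symm i ∈ J then 1 else 0) with hc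
  have hbd : ∀ i, |c i| ≤ 2 := by
    intro i
    simp only [hc]
    split_ifs <;> simp
  have hs : (∑ i : Fin (Fintype.card α), 5 ^ (i : ℕ) * c i) = 0 := by
    have : ∀ i : Fin (Fintype.card α), 5 ^ (i : ℕ) * c i
        = (if e.symm i ∈ I then (5:ℤ) ^ (i:ℕ) else 0) - (if e.symm i ∈ J then (5:ℤ) ^ (i:ℕ) else 0) := by
      intro i
      simp only [hc]
      split_ifs <;> ring
    rw [Finset.sum_congr rfl (fun i _ => this i), Finset.sum_sub_distrib, key, key]
    omega
  have hzero := digit5Fin _ c hbd hs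
  ext x
  have := hzero (e x)
  simp only [hc, Equiv.symm_apply_apply] at this
  split_ifs at this <;> simp_all

noncomputable def DArr (k : ℕ) (n : Fin k → ℕ) (x : ∀ i, Fin (n i)) : ℤ :=
  ∑ θ : BoxIdx k n, 5 ^ ((Fintype.equivFin (BoxIdx k n) θ : ℕ)) * boxFn θ x

noncomputable def Kconst (k : ℕ) (n : Fin k → ℕ) : ℤ :=
  ∑ θ : BoxIdx k n, 5 ^ ((Fintype.equivFin (BoxIdx k n) θ : ℕ)) * 2

lemma Kconst_nonneg (k : ℕ) (n : Fin k → ℕ) : 0 ≤ Kconst k n := by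
  apply Finset.sum_nonneg
  intro θ _
  positivity

lemma DArr_sum (k : ℕ) (n : Fin k → ℕ) (I : Finset (∀ i, Fin (n i))) :
    ∑ x ∈ I, DArr k n x = ∑ θ : BoxIdx k n,
      5 ^ ((Fintype.equivFin (BoxIdx k n) θ : ℕ)) * (∑ x ∈ I, boxFn θ x) := by
  unfold DArr
  rw [Finset.sum_comm]
  apply Finset.sum_congr rfl
  intro θ _
  rw [Finset.mul_sum]

lemma DArr_filter (k : ℕ) (n : Fin k → ℕ) (ℓ : Fin k) (S : Finset (Fin (n ℓ))) :
    ∑ x ∈ Finset.univ.filter (fun x => x ℓ ∈ S), DArr k n x = 0 := by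
  rw [DArr_sum]
  apply Finset.sum_eq_zero
  intro θ _
  rw [filter_sum_boxFn, mul_zero]

lemma boxFn_abs_le (k : ℕ) (n : Fin k → ℕ) (θ : BoxIdx k n) (x : ∀ i, Fin (n i)) :
    |boxFn θ x| ≤ 2 := by
  classical
  have := abs_sum_boxFn {x} θ
  simpa using this

lemma DArr_bound (k : ℕ) (n : Fin k → ℕ) (x : ∀ i, Fin (n i)) :
    |DArr k n x| ≤ Kconst k n := by
  unfold DArr Kconst
  refine le_trans (Finset.abs_sum_le_sum_abs _ _) ?_
  apply Finset.sum_le_sum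
  intro θ _
  rw [abs_mul, abs_pow]
  have h5 : |(5:ℤ)| = 5 := by norm_num
  rw [h5]
  exact mul_le_mul_of_nonneg_left (boxFn_abs_le k n θ x) (by positivity)

lemma DArr_zero_boxes (k : ℕ) (n : Fin k → ℕ) (I : Finset (∀ i, Fin (n i)))
    (h : ∑ x ∈ I, DArr k n x = 0) (θ : BoxIdx k n) : ∑ x ∈ I, boxFn θ x = 0 := by
  classical
  rw [DArr_sum] at h
  set eθ := Fintype.equivFin (BoxIdx k n) with heθ
  set c : Fin (Fintype.card (BoxIdx k n)) → ℤ := fun i => ∑ x ∈ I, boxFn (eθ.symm i) x with hc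
  have hre : (∑ i : Fin (Fintype.card (BoxIdx k n)), 5 ^ (i:ℕ) * c i) = 0 := by
    rw [← h]
    rw [← Equiv.sum_comp eθ.symm
      (fun θ' => 5 ^ ((eθ θ' : ℕ)) * (∑ x ∈ I, boxFn θ' x))]
    apply Finset.sum_congr rfl
    intro i _
    simp [hc]
  have := digit5Fin _ c (fun i => by simpa [hc] using abs_sum_boxFn I (eθ.symm i)) hre (eθ θ)
  simpa [hc] using this



/-- There exists a `q`-tuple of arrays `(M_1, …, M_q)` with positive integer entries such
that all coordinate-hyperplane sums agree across the tuple, and whenever non-empty subsets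
`I_1, …, I_q` have equal sums `Σ_{m ∈ I_s} (M_s)_m` across `s`, all the `I_s` coincide and
are a union of parallel coordinate hyperplanes `H_ℓ(S)`. -/
theorem stmt7 (k q : ℕ) (hk : 1 < k) (hq : 1 < q)
    (n : Fin k → ℕ) (hn : ∀ i, 1 < n i) (hmono : Monotone n) :
    ∃ M : Fin q → (∀ i : Fin k, Fin (n i)) → ℚ,
      (∀ (s : Fin q) (x : ∀ i : Fin k, Fin (n i)), ∃ c : ℕ, 0 < c ∧ M s x = (c : ℚ)) ∧
      (∀ (ℓ : Fin k) (r : Fin (n ℓ)) (s t : Fin q),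
        ∑ x ∈ Finset.univ.filter (fun x => x ℓ = r), M s x =
          ∑ x ∈ Finset.univ.filter (fun x => x ℓ = r), M t x) ∧
      (∀ I : Fin q → Finset (∀ i : Fin k, Fin (n i)), (∀ s, (I s).Nonempty) →
        (∀ s t : Fin q, ∑ x ∈ I s, M s x = ∑ x ∈ I t, M t x) →
        ∃ (ℓ : Fin k) (S : Finset (Fin (n ℓ))),
          ∀ s, I s = Finset.univ.filter (fun x => x ℓ ∈ S)) := by
  classical
  have hn' : ∀ i, 0 < n i := fun i => lt_trans one_pos (hn i)
  haveI : Nonempty (∀ i : Fin k, Fin (n i)) := ⟨fun i => ⟨0, hn' i⟩⟩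
  set e := Fintype.equivFin (∀ i : Fin k, Fin (n i)) with he
  set D := DArr k n with hD
  set K := Kconst k n with hKdef
  set R : ℤ := 1 + q * K with hR
  set N : ℤ := (Fintype.card (∀ i : Fin k, Fin (n i)) : ℤ) with hNdef
  set big : ℤ := 4 * (N * R) + 1 with hbig
  set Mz : Fin q → (∀ i : Fin k, Fin (n i)) → ℤ :=
    fun s x => big * 5 ^ ((e x : ℕ)) + (R + (s.val : ℤ) * D x) with hMz
  have hK0 : 0 ≤ K := Kconst_nonneg k n
  have hq0 : (0:ℤ) ≤ (q:ℤ) := by positivity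
  have hR1 : 1 ≤ R := by nlinarith
  have hN1 : 1 ≤ N := by
    have : 0 < Fintype.card (∀ i : Fin k, Fin (n i)) := Fintype.card_pos
    omega
  have hbb : 1 ≤ N * R := by nlinarith
  have hbig1 : 1 ≤ big := by linarith
  have habsD : ∀ (s : Fin q) (x : ∀ i : Fin k, Fin (n i)),
      |(s.val : ℤ) * D x| ≤ (q:ℤ) * K := by
    intro s x
    rw [abs_mul]
    apply mul_le_mul _ (DArr_bound k n x) (abs_nonneg _) hq0
    rw [abs_of_nonneg (by positivity)]
    exact_mod_cast le_of_lt s.isLt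
  have hlow1 : ∀ (s : Fin q) (x : ∀ i : Fin k, Fin (n i)), 1 ≤ R + (s.val:ℤ) * D x := by
    intro s x
    have := abs_le.mp (habsD s x)
    rw [hR]; omega
  have hlow2 : ∀ (s : Fin q) (x : ∀ i : Fin k, Fin (n i)), R + (s.val:ℤ) * D x ≤ 2 * R := by
    intro s x
    have := abs_le.mp (habsD s x)
    rw [hR]; omega
  have hsum_expand : ∀ (s : Fin q) (A : Finset (∀ i : Fin k, Fin (n i))),
      ∑ x ∈ A, Mz s x
        = big * (∑ x ∈ A, 5 ^ ((e x : ℕ))) + ∑ x ∈ A, (R + (s.val:ℤ) * D x) := by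
    intro s A
    rw [Finset.mul_sum, ← Finset.sum_add_distrib]
  have hlowsum : ∀ (s : Fin q) (A : Finset (∀ i : Fin k, Fin (n i))),
      0 ≤ (∑ x ∈ A, (R + (s.val:ℤ) * D x)) ∧
      (∑ x ∈ A, (R + (s.val:ℤ) * D x)) ≤ 2 * (N * R) := by
    intro s A
    constructor
    · apply Finset.sum_nonneg
      intro x _
      linarith [hlow1 s x]
    · calc (∑ x ∈ A, (R + (s.val:ℤ) * D x)) ≤ A.card • (2*R) :=
            Finset.sum_le_card_nsmul _ _ _ (fun x _ => hlow2 s x)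
        _ = (A.card : ℤ) * (2*R) := nsmul_eq_mul _ _
        _ ≤ N * (2*R) := by
            apply mul_le_mul_of_nonneg_right _ (by linarith)
            rw [hNdef]
            exact_mod_cast Finset.card_le_univ A
        _ = 2 * (N * R) := by ring
  have hpair : ∀ (s t : Fin q) (A B : Finset (∀ i : Fin k, Fin (n i))),
      (∑ x ∈ A, Mz s x = ∑ x ∈ B, Mz t x) →
      ((∑ x ∈ A, (5:ℤ) ^ ((e x : ℕ))) = ∑ x ∈ B, (5:ℤ) ^ ((e x:ℕ))) ∧
      ((∑ x ∈ A, (R + (s.val:ℤ) * D x)) = ∑ x ∈ B, (R + (t.val:ℤ) * D x)) := by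
    intro s t A B hEq
    rw [hsum_expand, hsum_expand] at hEq
    obtain ⟨h1a, h1b⟩ := hlowsum s A
    obtain ⟨h2a, h2b⟩ := hlowsum t B
    have hP : (∑ x ∈ A, (5:ℤ) ^ ((e x : ℕ))) = ∑ x ∈ B, (5:ℤ) ^ ((e x:ℕ)) := by
      by_contra hne
      have hd : big * ((∑ x ∈ A, (5:ℤ) ^ ((e x : ℕ))) - ∑ x ∈ B, (5:ℤ) ^ ((e x:ℕ)))
          = (∑ x ∈ B, (R + (t.val:ℤ) * D x)) - ∑ x ∈ A, (R + (s.val:ℤ) * D x) := by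
        linarith [hEq, mul_sub big (∑ x ∈ A, (5:ℤ) ^ ((e x : ℕ))) (∑ x ∈ B, (5:ℤ) ^ ((e x:ℕ)))]
      have h1 : 1 ≤ |(∑ x ∈ A, (5:ℤ) ^ ((e x : ℕ))) - ∑ x ∈ B, (5:ℤ) ^ ((e x:ℕ))| :=
        Int.one_le_abs (sub_ne_zero.mpr hne)
      have hbigle : big ≤ |big * ((∑ x ∈ A, (5:ℤ) ^ ((e x : ℕ))) - ∑ x ∈ B, (5:ℤ) ^ ((e x:ℕ)))| := by
        rw [abs_mul, abs_of_nonneg (by linarith : (0:ℤ) ≤ big)]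
        nlinarith
      rw [hd] at hbigle
      have hrhs : |(∑ x ∈ B, (R + (t.val:ℤ) * D x)) - ∑ x ∈ A, (R + (s.val:ℤ) * D x)| ≤ 2 * (N*R) := by
        rw [abs_le]
        constructor <;> linarith
      linarith
    refine ⟨hP, ?_⟩
    rw [hP] at hEq
    linarith
  refine ⟨fun s x => ((Mz s x : ℤ) : ℚ), ?_, ?_, ?_⟩
  · intro s x
    have h1 : 1 ≤ Mz s x := by
      have hp : (0:ℤ) ≤ big * 5 ^ ((e x : ℕ)) := by positivity
      have := hlow1 s x
      rw [hMz]
      dsimp only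
      linarith
    refine ⟨(Mz s x).toNat, by omega, ?_⟩
    show ((Mz s x : ℤ) : ℚ) = (((Mz s x).toNat : ℕ) : ℚ)
    exact_mod_cast (Int.toNat_of_nonneg (by omega : 0 ≤ Mz s x)).symm
  · intro ℓ r s t
    have hfil : (Finset.univ.filter (fun x : ∀ i : Fin k, Fin (n i) => x ℓ = r))
        = Finset.univ.filter (fun x : ∀ i : Fin k, Fin (n i) => x ℓ ∈ ({r} : Finset (Fin (n ℓ)))) := by
      apply Finset.filter_congr
      intro x _
      simp
    have hDf : ∑ x ∈ Finset.univ.filter (fun x => x ℓ = r), D x = 0 := by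
      rw [hfil, hD]
      exact DArr_filter k n ℓ {r}
    have hz : ∑ x ∈ Finset.univ.filter (fun x => x ℓ = r), Mz s x
        = ∑ x ∈ Finset.univ.filter (fun x => x ℓ = r), Mz t x := by
      have hsplitA : ∀ (u : ℤ) (A : Finset (∀ i : Fin k, Fin (n i))),
          ∑ x ∈ A, (R + u * D x) = R * A.card + u * ∑ x ∈ A, D x := by
        intro u A
        rw [Finset.sum_add_distrib, Finset.sum_const, nsmul_eq_mul, ← Finset.mul_sum,
          mul_comm (A.card : ℤ) R]
      rw [hsum_expand, hsum_expand, hsplitA, hsplitA, hDf, mul_zero, mul_zero]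
    dsimp only
    exact_mod_cast hz
  · intro I hne hsum
    have hsz : ∀ s t : Fin q, ∑ x ∈ I s, Mz s x = ∑ x ∈ I t, Mz t x := by
      intro s t
      have := hsum s t
      dsimp only at this
      exact_mod_cast this
    have hIeq : ∀ s t : Fin q, I s = I t := by
      intro s t
      exact pow5_sum_inj _ _ (hpair s t _ _ (hsz s t)).1
    set s0 : Fin q := ⟨0, by omega⟩ with hs0
    set s1 : Fin q := ⟨1, hq⟩ with hs1
    have hL := (hpair s0 s1 (I s0) (I s1) (hsz s0 s1)).2
    rw [hIeq s1 s0] at hL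
    have hsplit : ∀ (u : ℤ), ∑ x ∈ I s0, (R + u * D x)
        = R * (I s0).card + u * ∑ x ∈ I s0, D x := by
      intro u
      rw [Finset.sum_add_distrib, ← Finset.mul_sum, Finset.sum_const, nsmul_eq_mul, mul_comm]
    have hdzero : ∑ x ∈ I s0, D x = 0 := by
      have h0 := hsplit ((s0.val : ℤ))
      have h1 := hsplit ((s1.val : ℤ))
      rw [h0, h1] at hL
      simp only [hs0, hs1] at hL
      push_cast at hL
      linarith
    obtain ⟨ℓ, S, hIS⟩ := box_zero_hyperplane (by omega) hn' (I s0)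
      (fun θ => DArr_zero_boxes k n _ (by rw [← hD]; exact hdzero) θ)
    exact ⟨ℓ, S, fun s => by rw [hIeq s s0, hIS]⟩
end

section
/- Let k, q > 1 and 1 < n_1 ≤ ... ≤ n_k be integers. Let I_1, ..., I_q ⊆ [n_1] × ... × [n_k] be non-empty subsets such that either I_i ≠ I_j for some i ≠ j, or I_1 is not of the form H_ℓ(S) for any ℓ and S ⊆ [n_ℓ]. Then there exists a q-tuple (M_1,...,M_q) of rational arrays such that all hyperplane sums Σ_{m ∈ H_ℓ(r)} (M_s)_m agree across s ∈ {1,...,q} for every ℓ, r, but the sums Σ_{m ∈ I_s} (M_s)_m do not all agree across s. -/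
private lemma ifeq {P Q : Prop} [Decidable P] [Decidable Q]
    (h : (if P then (1:ℚ) else 0) = (if Q then (1:ℚ) else 0)) : P ↔ Q := by
  by_cases hP : P <;> by_cases hQ : Q <;> simp [hP, hQ] at h ⊢

private lemma conn {k : ℕ} {n : Fin k → ℕ} (G : (∀ i : Fin k, Fin (n i)) → ℚ) (ℓ : Fin k)
    (h : ∀ (x : ∀ i, Fin (n i)) (j : Fin k) (c : Fin (n j)), j ≠ ℓ →
      G (Function.update x j c) = G x) :
    ∀ x y, x ℓ = y ℓ → G x = G y := by
  suffices key : ∀ m : ℕ, ∀ x y : ∀ i : Fin k, Fin (n i), x ℓ = y ℓ →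
      (Finset.univ.filter (fun i => x i ≠ y i)).card ≤ m → G x = G y by
    intro x y hxy
    exact key _ x y hxy le_rfl
  intro m
  induction m with
  | zero =>
    intro x y hxy hc
    have hx : x = y := by
      funext i
      by_contra hi
      have hmem : i ∈ Finset.univ.filter (fun i => x i ≠ y i) := by simpa using hi
      have := Finset.card_pos.mpr ⟨i, hmem⟩
      omega
    rw [hx]
  | succ m ih =>
    intro x y hxy hc
    rcases Finset.eq_empty_or_nonempty (Finset.univ.filter (fun i => x i ≠ y i)) with he | ⟨j, hj⟩
    · have hx : x = y := by
        funext i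
        by_contra hi
        have hmem : i ∈ Finset.univ.filter (fun i => x i ≠ y i) := by simpa using hi
        rw [he] at hmem
        exact absurd hmem (Finset.notMem_empty i)
      rw [hx]
    · have hj' : x j ≠ y j := by simpa using hj
      have hjl : j ≠ ℓ := fun hjl => hj' (hjl ▸ hxy)
      have step := h x j (y j) hjl
      have hsub : Finset.univ.filter (fun i => Function.update x j (y j) i ≠ y i)
          ⊆ (Finset.univ.filter (fun i => x i ≠ y i)).erase j := by
        intro i hi
        simp only [Finset.mem_filter, Finset.mem_univ, true_and] at hi
        have hij : i ≠ j := by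
          intro hij; subst hij; simp [Function.update_self] at hi
        rw [Finset.mem_erase]
        refine ⟨hij, ?_⟩
        simp only [Finset.mem_filter, Finset.mem_univ, true_and]
        rwa [Function.update_of_ne hij] at hi
      have h1 := Finset.card_le_card hsub
      have h2 := Finset.card_erase_of_mem hj
      have h3 := Finset.card_pos.mpr ⟨j, hj⟩
      have hcard : (Finset.univ.filter (fun i => Function.update x j (y j) i ≠ y i)).card ≤ m := by
        omega
      have hl : Function.update x j (y j) ℓ = y ℓ := by
        rw [Function.update_of_ne (Ne.symm hjl)]
        exact hxy
      calc G x = G (Function.update x j (y j)) := step.symm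
        _ = G y := ih _ _ hl hcard

private lemma main_aux {k : ℕ} {n : Fin k → ℕ} (hk : 0 < k) (hn : ∀ i, 0 < n i)
    (f : (∀ i : Fin k, Fin (n i)) → ℚ)
    (hf01 : ∀ w, f w = 0 ∨ f w = 1)
    (hR : ∀ (ℓ₁ ℓ₂ : Fin k), ℓ₁ ≠ ℓ₂ → ∀ x a c,
      f x + f (Function.update (Function.update x ℓ₁ a) ℓ₂ c)
        = f (Function.update x ℓ₁ a) + f (Function.update x ℓ₂ c)) :
    ∃ ℓ : Fin k, ∀ x y, x ℓ = y ℓ → f x = f y := by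
  have x₀ : ∀ i : Fin k, Fin (n i) := fun i => ⟨0, hn i⟩
  have stepA : ∀ (ℓ : Fin k) (z : ∀ i, Fin (n i)) (a : Fin (n ℓ)),
      f (Function.update z ℓ a) ≠ f z →
      ∃ (a' b' : Fin (n ℓ)), ∀ x,
        f (Function.update x ℓ a') = 1 ∧ f (Function.update x ℓ b') = 0 := by
    intro ℓ z a hz
    have hGinv : ∀ (x : ∀ i, Fin (n i)) (j : Fin k) (c : Fin (n j)),
        f (Function.update (Function.update x j c) ℓ a)
          - f (Function.update (Function.update x j c) ℓ (z ℓ)) =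
        f (Function.update x ℓ a) - f (Function.update x ℓ (z ℓ)) := by
      intro x j c
      rcases eq_or_ne j ℓ with rfl | hjl
      · rw [Function.update_idem, Function.update_idem]
      · have r1 := hR ℓ j (Ne.symm hjl) x a c
        have r2 := hR ℓ j (Ne.symm hjl) x (z ℓ) c
        rw [Function.update_comm hjl, Function.update_comm hjl]
        linarith
    have hGconst : ∀ x y : ∀ i, Fin (n i),
        f (Function.update x ℓ a) - f (Function.update x ℓ (z ℓ)) =
        f (Function.update y ℓ a) - f (Function.update y ℓ (z ℓ)) := by
      intro x y
      have h2 := conn (fun x => f (Function.update x ℓ a) - f (Function.update x ℓ (z ℓ))) ℓ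
        (fun x j c _ => hGinv x j c) (Function.update x ℓ (y ℓ)) y
        (by rw [Function.update_self])
      have h1 := hGinv x ℓ (y ℓ)
      linarith
    have hz' : f (Function.update z ℓ a) - f (Function.update z ℓ (z ℓ)) ≠ 0 := by
      rw [Function.update_eq_self]
      exact sub_ne_zero.mpr hz
    have hsign : f (Function.update z ℓ a) - f (Function.update z ℓ (z ℓ)) = 1 ∨
        f (Function.update z ℓ a) - f (Function.update z ℓ (z ℓ)) = -1 := by
      rcases hf01 (Function.update z ℓ a) with h1 | h1 <;>
        rcases hf01 (Function.update z ℓ (z ℓ)) with h2 | h2 <;>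
          rw [h1, h2] at hz' ⊢ <;> revert hz' <;> norm_num
    rcases hsign with hs | hs
    · refine ⟨a, z ℓ, fun x => ?_⟩
      have hx := (hGconst x z).trans hs
      rcases hf01 (Function.update x ℓ a) with h1 | h1 <;>
        rcases hf01 (Function.update x ℓ (z ℓ)) with h2 | h2 <;>
          rw [h1, h2] at hx <;> constructor <;> linarith
    · refine ⟨z ℓ, a, fun x => ?_⟩
      have hx := (hGconst x z).trans hs
      rcases hf01 (Function.update x ℓ a) with h1 | h1 <;>
        rcases hf01 (Function.update x ℓ (z ℓ)) with h2 | h2 <;>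
          rw [h1, h2] at hx <;> constructor <;> linarith
  by_cases hrel : ∃ (ℓ : Fin k) (z : ∀ i, Fin (n i)) (a : Fin (n ℓ)),
      f (Function.update z ℓ a) ≠ f z
  · obtain ⟨ℓ, z, a, hz⟩ := hrel
    refine ⟨ℓ, ?_⟩
    have hirr : ∀ (x : ∀ i, Fin (n i)) (j : Fin k) (c : Fin (n j)), j ≠ ℓ →
        f (Function.update x j c) = f x := by
      intro x j c hjl
      by_contra hja
      obtain ⟨a1, b1, hab1⟩ := stepA ℓ z a hz
      obtain ⟨c1, d1, hcd1⟩ := stepA j x c hja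
      have h1 := (hcd1 (Function.update x₀ ℓ a1)).2
      have h2 := (hab1 (Function.update x₀ j d1)).1
      rw [Function.update_comm hjl] at h2
      rw [h1] at h2
      norm_num at h2
    exact conn f ℓ hirr
  · push_neg at hrel
    refine ⟨⟨0, hk⟩, fun x y _ => ?_⟩
    have h1 := hrel ⟨0, hk⟩ x (y ⟨0, hk⟩)
    have h2 := conn f ⟨0, hk⟩ (fun x j c _ => hrel j x c)
      (Function.update x ⟨0, hk⟩ (y ⟨0, hk⟩)) y (by rw [Function.update_self])
    rw [← h1, h2]

/-- If non-empty subsets `I_1, …, I_q` of `[n_1] × ⋯ × [n_k]` are not all equal, or `I_1`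
is not a union of parallel coordinate hyperplanes, then there is a `q`-tuple of rational
arrays all of whose coordinate-hyperplane sums agree across the tuple, while the sums over
the `I_s` do not all agree (i.e. `Z̄ \ Z_{I_1,…,I_q} ≠ ∅`). -/
theorem stmt8 (k q : ℕ) (hk : 1 < k) (hq : 1 < q)
    (n : Fin k → ℕ) (hn : ∀ i, 1 < n i) (hmono : Monotone n)
    (I : Fin q → Finset (∀ i : Fin k, Fin (n i))) (hne : ∀ s, (I s).Nonempty)
    (hI : (∃ s t : Fin q, I s ≠ I t) ∨
      ¬ ∃ (ℓ : Fin k) (S : Finset (Fin (n ℓ))),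
        I ⟨0, by omega⟩ = Finset.univ.filter (fun x => x ℓ ∈ S)) :
    ∃ M : Fin q → (∀ i : Fin k, Fin (n i)) → ℚ,
      (∀ (ℓ : Fin k) (r : Fin (n ℓ)) (s t : Fin q),
        ∑ x ∈ Finset.univ.filter (fun x => x ℓ = r), M s x =
          ∑ x ∈ Finset.univ.filter (fun x => x ℓ = r), M t x) ∧
      ∃ s t : Fin q, ∑ x ∈ I s, M s x ≠ ∑ x ∈ I t, M t x := by
  rcases hI with ⟨s, t, hst⟩ | hI
  · -- Case 1: two of the sets differ; one common delta array works.
    obtain ⟨x, hx⟩ : ∃ x, ¬(x ∈ I s ↔ x ∈ I t) := by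
      by_contra h
      push_neg at h
      exact hst (Finset.ext fun x => h x)
    refine ⟨fun _ y => if y = x then (1:ℚ) else 0, fun _ _ _ _ => rfl, s, t, ?_⟩
    rw [Finset.sum_ite_eq' (I s) x (fun _ => (1:ℚ)),
        Finset.sum_ite_eq' (I t) x (fun _ => (1:ℚ))]
    by_cases h1 : x ∈ I s <;> by_cases h2 : x ∈ I t <;>
      simp [h1, h2] at hx ⊢
  · -- Case 2
    set i0 : Fin q := ⟨0, by omega⟩ with hi0
    set f : (∀ i : Fin k, Fin (n i)) → ℚ := fun x => if x ∈ I i0 then 1 else 0 with hf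
    have hf01 : ∀ w, f w = 0 ∨ f w = 1 := by
      intro w; rw [hf]; dsimp only; split_ifs <;> simp
    by_cases hR : ∀ (ℓ₁ ℓ₂ : Fin k), ℓ₁ ≠ ℓ₂ → ∀ x a c,
        f x + f (Function.update (Function.update x ℓ₁ a) ℓ₂ c)
          = f (Function.update x ℓ₁ a) + f (Function.update x ℓ₂ c)
    · exfalso
      obtain ⟨ℓ, hdep⟩ := main_aux (by omega) (fun i => by have := hn i; omega) f hf01 hR
      apply hI
      have x₀ : ∀ i : Fin k, Fin (n i) := fun i => ⟨0, by have := hn i; omega⟩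
      refine ⟨ℓ, Finset.univ.filter (fun r => Function.update x₀ ℓ r ∈ I i0), ?_⟩
      ext w
      simp only [Finset.mem_filter, Finset.mem_univ, true_and]
      have hc := hdep w (Function.update x₀ ℓ (w ℓ)) (by rw [Function.update_self])
      exact ifeq hc
    · push_neg at hR
      obtain ⟨ℓ₁, ℓ₂, h12, x, a, c, hv⟩ := hR
      set p1 := x with hp1
      set p2 := Function.update x ℓ₁ a with hp2
      set p3 := Function.update x ℓ₂ c with hp3
      set p4 := Function.update (Function.update x ℓ₁ a) ℓ₂ c with hp4
      set D : (∀ i : Fin k, Fin (n i)) → ℚ := fun y =>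
        (if y = p1 then (1:ℚ) else 0) - (if y = p2 then 1 else 0)
          - (if y = p3 then 1 else 0) + (if y = p4 then 1 else 0) with hD
      have hsumD : ∀ T : Finset (∀ i : Fin k, Fin (n i)),
          ∑ y ∈ T, D y = (if p1 ∈ T then (1:ℚ) else 0) - (if p2 ∈ T then 1 else 0)
            - (if p3 ∈ T then 1 else 0) + (if p4 ∈ T then 1 else 0) := by
        intro T
        rw [hD]
        dsimp only
        rw [Finset.sum_add_distrib, Finset.sum_sub_distrib, Finset.sum_sub_distrib,
          Finset.sum_ite_eq' T p1 (fun _ => (1:ℚ)), Finset.sum_ite_eq' T p2 (fun _ => (1:ℚ)),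
          Finset.sum_ite_eq' T p3 (fun _ => (1:ℚ)), Finset.sum_ite_eq' T p4 (fun _ => (1:ℚ))]
      have hDhyp : ∀ (ℓ : Fin k) (r : Fin (n ℓ)),
          ∑ y ∈ Finset.univ.filter (fun x => x ℓ = r), D y = 0 := by
        intro ℓ r
        rw [hsumD]
        have hm : ∀ p : ∀ i : Fin k, Fin (n i),
            (p ∈ Finset.univ.filter (fun x => x ℓ = r)) = (p ℓ = r) := by
          intro p; simp
        simp only [hm]
        rcases eq_or_ne ℓ ℓ₁ with rfl | hℓ1
        · have e2 : p2 ℓ = a := by rw [hp2, Function.update_self]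
          have e3 : p3 ℓ = x ℓ := by rw [hp3, Function.update_of_ne h12]
          have e4 : p4 ℓ = a := by
            rw [hp4, Function.update_of_ne h12, Function.update_self]
          rw [e2, e3, e4, hp1]
          ring
        · rcases eq_or_ne ℓ ℓ₂ with rfl | hℓ2
          · have e2 : p2 ℓ = x ℓ := by rw [hp2, Function.update_of_ne hℓ1]
            have e3 : p3 ℓ = c := by rw [hp3, Function.update_self]
            have e4 : p4 ℓ = c := by rw [hp4, Function.update_self]
            rw [e2, e3, e4, hp1]
            ring
          · have e2 : p2 ℓ = x ℓ := by rw [hp2, Function.update_of_ne hℓ1]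
            have e3 : p3 ℓ = x ℓ := by rw [hp3, Function.update_of_ne hℓ2]
            have e4 : p4 ℓ = x ℓ := by
              rw [hp4, Function.update_of_ne hℓ2, Function.update_of_ne hℓ1]
            rw [e2, e3, e4, hp1]
            ring
      set i1 : Fin q := ⟨1, by omega⟩ with hi1
      have hne01 : i1 ≠ i0 := by
        rw [hi0, hi1]
        simp [Fin.ext_iff]
      refine ⟨fun s y => if s = i0 then D y else 0, ?_, i0, i1, ?_⟩
      · have hz : ∀ (ℓ : Fin k) (r : Fin (n ℓ)) (s : Fin q),
            ∑ y ∈ Finset.univ.filter (fun x => x ℓ = r), (if s = i0 then D y else 0) = 0 := by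
          intro ℓ r s
          by_cases hs : s = i0
          · have : ∀ y : ∀ i : Fin k, Fin (n i), (if s = i0 then D y else 0) = D y :=
              fun y => if_pos hs
            rw [Finset.sum_congr rfl (fun y _ => this y)]
            exact hDhyp ℓ r
          · simp [hs]
        intro ℓ r s t
        simp only [hz]
      · show ∑ y ∈ I i0, (if (i0:Fin q) = i0 then D y else 0) ≠
            ∑ y ∈ I i1, (if (i1:Fin q) = i0 then D y else 0)
        have e1 : ∑ y ∈ I i0, (if (i0:Fin q) = i0 then D y else 0) = ∑ y ∈ I i0, D y :=
          Finset.sum_congr rfl (fun y _ => if_pos rfl)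
        have e2 : ∑ y ∈ I i1, (if (i1:Fin q) = i0 then D y else 0) = 0 :=
          (Finset.sum_congr rfl (fun y _ => if_neg hne01)).trans Finset.sum_const_zero
        rw [e1, e2, hsumD]
        simp only [hf] at hv
        intro h
        apply hv
        by_cases h1 : p1 ∈ I i0 <;> by_cases h2 : p2 ∈ I i0 <;>
          by_cases h3 : p3 ∈ I i0 <;> by_cases h4 : p4 ∈ I i0 <;>
            simp only [h1, h2, h3, h4, if_true, if_false] at h ⊢ <;> revert h <;> norm_num
end

section
/- Let D be a Krull domain with quotient field K admitting a prime element π with normalized valuation v, and let I be a finite set. Let f ∈ Int(D) be of the form f = (∏_{i∈I} f_i)/π^e with each f_i ∈ D[X] irreducible over K and e ∈ ℕ, and suppose min{v_Q(f(a)) : a ∈ D} = 0 for every height-one prime Q of D. If f = g_1 ⋯ g_m is a decomposition into non-units of Int(D), then, up to multiplication by units of D, each g_j = (∏_{i ∈ I_j} f_i)/π^{e_j}, where the I_j are non-empty and partition I and Σ_j e_j = e. -/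
open Polynomial

/-- The ring of integer-valued polynomials `Int(D) ⊆ K[X]`. -/
noncomputable def IntPolySubring (D K : Type*) [CommRing D] [CommRing K] [Algebra D K] :
    Subring (Polynomial K) :=
  ⨅ a : D, Subring.comap (Polynomial.evalRingHom (algebraMap D K a)) (algebraMap D K).range

lemma mem_intPoly_iff {D K : Type*} [CommRing D] [CommRing K] [Algebra D K]
    (p : Polynomial K) :
    p ∈ IntPolySubring D K ↔
      ∀ a : D, ∃ d : D, algebraMap D K d = p.eval (algebraMap D K a) := by
  simp [IntPolySubring, Subring.mem_iInf, Subring.mem_comap, RingHom.mem_range]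

/-- pair splitting in `K[X]` -/
lemma split_pair {K : Type*} [Field K] {ι : Type*} [DecidableEq ι] (F : ι → Polynomial K)
    (hF : ∀ i, Irreducible (F i)) (s : Finset ι) :
    ∀ (p q : Polynomial K) (c : K), c ≠ 0 → p * q = C c * ∏ i ∈ s, F i →
    ∃ t ⊆ s, ∃ c1 c2 : K, c1 ≠ 0 ∧ c2 ≠ 0 ∧
      p = C c1 * ∏ i ∈ t, F i ∧ q = C c2 * ∏ i ∈ s \ t, F i := by
  induction s using Finset.induction_on with
  | empty =>
    intro p q c hc h
    simp only [Finset.prod_empty, mul_one] at h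
    have hpu : IsUnit p := isUnit_of_mul_isUnit_left (h ▸ (Polynomial.isUnit_C.mpr hc.isUnit))
    obtain ⟨c1, hc1u, hc1⟩ := Polynomial.isUnit_iff.mp hpu
    have hc1ne : c1 ≠ 0 := hc1u.ne_zero
    have hCc1 : (C c1 : Polynomial K) ≠ 0 := by simpa [Polynomial.C_eq_zero] using hc1ne
    refine ⟨∅, Finset.Subset.refl _, c1, c / c1, hc1ne, div_ne_zero hc hc1ne, by simp [hc1], ?_⟩
    have hq : q = C (c / c1) := by
      apply mul_left_cancel₀ hCc1
      rw [hc1, h, ← hc1, ← C_mul]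
      congr 1
      field_simp
    simp [hq]
  | @insert a s' ha ih =>
    intro p q c hc h
    have hprime : Prime (F a) := (hF a).prime
    rw [Finset.prod_insert ha] at h
    have hdvd : F a ∣ p * q := ⟨C c * ∏ i ∈ s', F i, by rw [h]; ring⟩
    rcases hprime.2.2 p q hdvd with ⟨p', hp'⟩ | ⟨q', hq'⟩
    · have h' : p' * q = C c * ∏ i ∈ s', F i := by
        apply mul_left_cancel₀ hprime.ne_zero
        rw [← mul_assoc, ← hp', h]; ring
      obtain ⟨t, hts, c1, c2, h1, h2, hp2, hq2⟩ := ih p' q c hc h'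
      refine ⟨insert a t, Finset.insert_subset_insert a hts, c1, c2, h1, h2, ?_, ?_⟩
      · have hat : a ∉ t := fun hat => ha (hts hat)
        rw [hp', hp2, Finset.prod_insert hat]; ring
      · have hset : insert a s' \ insert a t = s' \ t := by
          ext x
          simp only [Finset.mem_sdiff, Finset.mem_insert, not_or]
          constructor
          · rintro ⟨h1 | h1, h2, h3⟩
            · exact absurd h1 h2
            · exact ⟨h1, h3⟩
          · rintro ⟨h1, h2⟩
            exact ⟨Or.inr h1, fun hx => ha (hx ▸ h1), h2⟩
        rw [hset]; exact hq2
    · have h' : p * q' = C c * ∏ i ∈ s', F i := by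
        apply mul_left_cancel₀ hprime.ne_zero
        rw [show F a * (p * q') = p * (F a * q') by ring, ← hq', h]; ring
      obtain ⟨t, hts, c1, c2, h1, h2, hp2, hq2⟩ := ih p q' c hc h'
      have hat : a ∉ t := fun hat => ha (hts hat)
      refine ⟨t, hts.trans (Finset.subset_insert a s'), c1, c2, h1, h2, hp2, ?_⟩
      have hset : insert a s' \ t = insert a (s' \ t) := by
        ext x
        simp only [Finset.mem_sdiff, Finset.mem_insert]
        constructor
        · rintro ⟨h1 | h1, h2⟩
          · exact Or.inl h1
          · exact Or.inr ⟨h1, h2⟩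
        · rintro (rfl | ⟨h1, h2⟩)
          · exact ⟨Or.inl rfl, fun hx => hat hx⟩
          · exact ⟨Or.inr h1, h2⟩
      rw [hset, Finset.prod_insert (by
        simp only [Finset.mem_sdiff]; exact fun hmem => ha hmem.1), hq', hq2]
      ring

lemma split_many {K : Type*} [Field K] {ι : Type*} [DecidableEq ι] (F : ι → Polynomial K)
    (hF : ∀ i, Irreducible (F i)) :
    ∀ (m : ℕ) (g : Fin m → Polynomial K) (s : Finset ι) (c : K), c ≠ 0 →
      ∏ j, g j = C c * ∏ i ∈ s, F i →
      ∃ (t : Fin m → Finset ι) (d : Fin m → K),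
        (∀ j, t j ⊆ s) ∧ (∀ i ∈ s, ∃! j, i ∈ t j) ∧ (∀ j, d j ≠ 0) ∧
        ∀ j, g j = C (d j) * ∏ i ∈ t j, F i := by
  intro m
  induction m with
  | zero =>
    intro g s c hc h
    simp only [Finset.univ_eq_empty, Finset.prod_empty] at h
    refine ⟨Fin.elim0, Fin.elim0, fun j => j.elim0, ?_, fun j => j.elim0, fun j => j.elim0⟩
    intro i hi
    exfalso
    have hFdvd : F i ∣ ∏ i ∈ s, F i := Finset.dvd_prod_of_mem F hi
    have hunit : IsUnit (∏ i ∈ s, F i) := by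
      have hC : IsUnit (C c : Polynomial K) := Polynomial.isUnit_C.mpr hc.isUnit
      exact isUnit_of_mul_isUnit_right (h ▸ isUnit_one : IsUnit (C c * ∏ i ∈ s, F i))
    exact (hF i).not_isUnit (isUnit_of_dvd_unit hFdvd hunit)
  | succ m ih =>
    intro g s c hc h
    rw [Fin.prod_univ_succ] at h
    obtain ⟨t0, ht0s, c1, c2, hc1, hc2, hg0, hrest⟩ :=
      split_pair F hF s (g 0) (∏ j : Fin m, g j.succ) c hc h
    obtain ⟨t', d', ht's, hpart', hd', hfact'⟩ := ih (fun j => g j.succ) (s \ t0) c2 hc2 hrest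
    refine ⟨Fin.cases t0 t', Fin.cases c1 d', ?_, ?_, ?_, ?_⟩
    · intro j
      refine Fin.cases ?_ ?_ j
      · simpa using ht0s
      · intro k
        simpa using (ht's k).trans (Finset.sdiff_subset)
    · intro i hi
      by_cases hit0 : i ∈ t0
      · refine ⟨0, by simpa using hit0, ?_⟩
        intro j hj
        rcases Fin.eq_zero_or_eq_succ j with rfl | ⟨k, rfl⟩
        · rfl
        · exfalso
          have hk : i ∈ t' k := by simpa using hj
          have : i ∈ s \ t0 := ht's k hk
          exact (Finset.mem_sdiff.mp this).2 hit0
      · have hi' : i ∈ s \ t0 := Finset.mem_sdiff.mpr ⟨hi, hit0⟩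
        obtain ⟨k, hk, hkuniq⟩ := hpart' i hi'
        refine ⟨k.succ, by simpa using hk, ?_⟩
        intro j hj
        rcases Fin.eq_zero_or_eq_succ j with rfl | ⟨k', rfl⟩
        · exact absurd (by simpa using hj) hit0
        · have : k' = k := hkuniq k' (by simpa using hj)
          rw [this]
    · intro j
      refine Fin.cases ?_ ?_ j
      · simpa using hc1
      · intro k; simpa using hd' k
    · intro j
      refine Fin.cases ?_ ?_ j
      · simpa using hg0
      · intro k; simpa using hfact' k

lemma unit_mul_pow_eq_pow {R : Type*} [CommRing R] [IsDomain R] {π u : R}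
    (hπ : Prime π) (hu : IsUnit u) {a b : ℕ} (h : u * π ^ a = π ^ b) : a = b := by
  rcases lt_trichotomy a b with hab | hab | hab
  · exfalso
    have h2 : π ^ a * u = π ^ a * π ^ (b - a) := by
      rw [← pow_add, Nat.add_sub_cancel' hab.le, mul_comm, h]
    have h3 : u = π ^ (b - a) := mul_left_cancel₀ (pow_ne_zero a hπ.ne_zero) h2
    have h4 : π ∣ u := by
      rw [h3]
      exact dvd_pow_self π (by omega)
    exact hπ.not_unit (isUnit_of_dvd_unit h4 hu)
  · exact hab
  · exfalso
    have h2 : π ^ b * (u * π ^ (a - b)) = π ^ b * 1 := by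
      rw [mul_one]
      calc π ^ b * (u * π ^ (a - b)) = u * (π ^ b * π ^ (a - b)) := by ring
        _ = u * π ^ a := by rw [← pow_add, Nat.add_sub_cancel' hab.le]
        _ = π ^ b := h
    have h3 : u * π ^ (a - b) = 1 := mul_left_cancel₀ (pow_ne_zero b hπ.ne_zero) h2
    have h4 : π ∣ u * π ^ (a - b) := Dvd.dvd.mul_left (dvd_pow_self π (by omega)) u
    exact hπ.not_unit (isUnit_of_dvd_unit h4 (h3 ▸ isUnit_one))

/-- Factorization structure in `Int(D)` for a Krull domain `D` with prime element `π`: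
if `f = (∏_{i∈I} f_i)/π^e ∈ Int(D)` with each `f_i ∈ D[X]` irreducible over `K`, and
`min {v_Q(f(a)) : a ∈ D} = 0` for every height-one prime `Q` (i.e. some value `f(a) ∈ D`
lies outside `Q`), then in any decomposition `f = g_1 ⋯ g_m` into non-units of `Int(D)`,
each `g_j` is, up to a unit of `D`, of the form `(∏_{i∈I_j} f_i)/π^{e_j}` where the `I_j`
are non-empty and partition `I` and `Σ_j e_j = e`. -/
theorem stmt9 (D : Type*) [CommRing D] [IsDomain D] (hD : IsKrullDomain D)
    (π : D) (hπ : Prime π)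
    (ι : Type*) [Fintype ι] (fi : ι → Polynomial D)
    (hirr : ∀ i, Irreducible ((fi i).map (algebraMap D (FractionRing D))))
    (e : ℕ) (f : Polynomial (FractionRing D))
    (hf : f * C ((algebraMap D (FractionRing D) π) ^ e) =
      ∏ i, (fi i).map (algebraMap D (FractionRing D)))
    (hfint : f ∈ IntPolySubring D (FractionRing D))
    (hmin : ∀ Q : Ideal D, HeightOnePrime D Q → ∃ (a d : D),
      f.eval (algebraMap D (FractionRing D) a) = algebraMap D (FractionRing D) d ∧ d ∉ Q)
    (m : ℕ) (g : Fin m → IntPolySubring D (FractionRing D))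
    (hnonunit : ∀ j, ¬ IsUnit (g j))
    (hprod : (∏ j, (g j : Polynomial (FractionRing D))) = f) :
    ∃ (I' : Fin m → Finset ι) (e' : Fin m → ℕ) (u : Fin m → Dˣ),
      (∀ j, (I' j).Nonempty) ∧
      (∀ i : ι, ∃! j : Fin m, i ∈ I' j) ∧
      (∑ j, e' j = e) ∧
      ∀ j, (g j : Polynomial (FractionRing D)) * C ((algebraMap D (FractionRing D) π) ^ e' j) =
        C (algebraMap D (FractionRing D) (u j : D)) *
          ∏ i ∈ I' j, (fi i).map (algebraMap D (FractionRing D)) := by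
  classical
  obtain ⟨-, -, hint⟩ := hD
  set φ := algebraMap D (FractionRing D) with hφdef
  have hinj : Function.Injective φ := IsFractionRing.injective D (FractionRing D)
  have hπK : φ π ≠ 0 := fun h0 => hπ.ne_zero (hinj (h0.trans (map_zero φ).symm))
  set F := fun i : ι => (fi i).map φ with hFdef
  have hFirr : ∀ i, Irreducible (F i) := hirr
  have hFne : (∏ i, F i) ≠ 0 :=
    Finset.prod_ne_zero_iff.mpr fun i _ => (hFirr i).ne_zero
  -- every nonzero nonunit lies in a height-one prime
  have lemE : ∀ d : D, d ≠ 0 → ¬IsUnit d → ∃ Q, HeightOnePrime D Q ∧ d ∈ Q := by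
    intro d hd0 hdu
    by_contra hcon
    push_neg at hcon
    have hφd : φ d ≠ 0 := fun h0 => hd0 (hinj (h0.trans (map_zero φ).symm))
    obtain ⟨d', hd'⟩ := hint (φ d)⁻¹ (fun P hP =>
      ⟨1, d, hcon P hP, by rw [inv_mul_cancel₀ hφd, map_one]⟩)
    apply hdu
    refine IsUnit.of_mul_eq_one (a := d) d' (hinj ?_)
    rw [map_mul, ← hd', mul_inv_cancel₀ hφd, map_one]
  cases m with
  | zero =>
    have hf1 : f = 1 := by simpa using hprod.symm
    rw [hf1, one_mul] at hf
    have hEmpty : IsEmpty ι := by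
      by_contra hne
      obtain ⟨i⟩ := not_isEmpty_iff.mp hne
      have hdvd : F i ∣ C ((φ π) ^ e) := hf ▸ Finset.dvd_prod_of_mem F (Finset.mem_univ i)
      have hu : IsUnit (C ((φ π) ^ e) : Polynomial (FractionRing D)) :=
        Polynomial.isUnit_C.mpr (pow_ne_zero e hπK).isUnit
      exact (hFirr i).not_isUnit (isUnit_of_dvd_unit hdvd hu)
    have he : e = 0 := by
      have hC1 : (C ((φ π) ^ e) : Polynomial (FractionRing D)) = 1 := by
        rw [hf]
        simp
      have hpow1 : (φ π) ^ e = 1 := by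
        have := Polynomial.C_inj.mp (hC1.trans (Polynomial.C_1).symm)
        exact this
      have h2 : π ^ e = 1 := hinj (by rw [map_pow, map_one]; exact hpow1)
      by_contra he0
      obtain ⟨e1, rfl⟩ : ∃ e1, e = e1 + 1 := ⟨e - 1, by omega⟩
      exact hπ.not_unit (IsUnit.of_mul_eq_one (a := π) (π ^ e1)
        (by rw [← pow_succ']; exact h2))
    refine ⟨Fin.elim0, Fin.elim0, Fin.elim0, fun j => j.elim0,
      fun i => (hEmpty.elim i), by simp [he], fun j => j.elim0⟩
  | succ m' =>
    have hpowne : ((φ π) ^ e) ≠ 0 := pow_ne_zero e hπK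
    have hc0 : ((φ π) ^ e)⁻¹ ≠ 0 := inv_ne_zero hpowne
    have hfeq : ∏ j, (g j : Polynomial (FractionRing D)) =
        C ((φ π) ^ e)⁻¹ * ∏ i, F i := by
      rw [hprod, ← hf, mul_comm f (C ((φ π) ^ e)), ← mul_assoc, ← C_mul,
        inv_mul_cancel₀ hpowne, C_1, one_mul]
    obtain ⟨t, d, hts, hpart, hdne, hgf⟩ :=
      split_many F hFirr (m' + 1) (fun j => (g j : Polynomial (FractionRing D)))
        Finset.univ _ hc0 hfeq
    -- the t's partition univ, so products recombine
    have hdisj : ((Finset.univ : Finset (Fin (m' + 1))) : Set (Fin (m' + 1))).PairwiseDisjoint t := by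
      intro j _ j' _ hne
      show Disjoint (t j) (t j')
      rw [Finset.disjoint_left]
      intro i hij hij'
      exact hne ((hpart i (Finset.mem_univ i)).unique hij hij')
    have hbiU : (Finset.univ : Finset (Fin (m' + 1))).biUnion t = Finset.univ := by
      ext i
      simp only [Finset.mem_biUnion, Finset.mem_univ, iff_true, true_and]
      obtain ⟨j0, hj0⟩ := (hpart i (Finset.mem_univ i)).exists
      exact ⟨j0, hj0⟩
    have hFsplit : ∏ j, ∏ i ∈ t j, F i = ∏ i, F i := by
      rw [← Finset.prod_biUnion hdisj, hbiU]
    have hdprod : (∏ j, d j) * (φ π) ^ e = 1 := by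
      have h1 : C (∏ j, d j) * ∏ i, F i = C ((φ π) ^ e)⁻¹ * ∏ i, F i := by
        rw [← hfeq]
        rw [map_prod, ← hFsplit, ← Finset.prod_mul_distrib]
        exact (Finset.prod_congr rfl fun j _ => (hgf j).symm)
      have h2 : (∏ j, d j) = ((φ π) ^ e)⁻¹ :=
        Polynomial.C_inj.mp (mul_right_cancel₀ hFne h1)
      rw [h2, inv_mul_cancel₀ hpowne]
    -- integer-valuedness of each g j
    have hval : ∀ (j : Fin (m' + 1)) (a : D),
        ∃ r : D, φ r = Polynomial.eval (φ a) (g j : Polynomial (FractionRing D)) :=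
      fun j a => (mem_intPoly_iff _).mp (g j).2 a
    -- key localization fact for the constants
    have hcQ : ∀ Q : Ideal D, HeightOnePrime D Q → ∀ j,
        ∃ a b : D, b ∉ Q ∧ (d j)⁻¹ * φ b = φ a := by
      intro Q hQ
      obtain ⟨a, dd, hfa, hddQ⟩ := hmin Q hQ
      choose r hr using fun j => hval j a
      have hdd_eq : dd = ∏ j, r j := by
        apply hinj
        rw [← hfa, ← hprod, Polynomial.eval_prod, map_prod]
        exact Finset.prod_congr rfl fun j _ => (hr j).symm
      have hrQ : ∀ j, r j ∉ Q := by
        intro j hj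
        obtain ⟨cc, hcc⟩ := Finset.dvd_prod_of_mem r (Finset.mem_univ j)
        exact hddQ (by rw [hdd_eq, hcc]; exact Ideal.mul_mem_right _ _ hj)
      intro j
      have hFeval : Polynomial.eval (φ a) (∏ i ∈ t j, F i) =
          φ ((∏ i ∈ t j, fi i).eval a) := by
        have hmap : ∏ i ∈ t j, F i = (∏ i ∈ t j, fi i).map φ := by
          rw [Polynomial.map_prod]
        rw [hmap, Polynomial.eval_map, Polynomial.eval₂_hom]
      refine ⟨(∏ i ∈ t j, fi i).eval a, r j, hrQ j, ?_⟩
      rw [hr j, hgf j, Polynomial.eval_mul, Polynomial.eval_C, ← mul_assoc,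
        inv_mul_cancel₀ (hdne j), one_mul, hFeval]
    -- multiplicativity of the localization membership
    have hone : ∀ Q : Ideal D, HeightOnePrime D Q →
        ∃ a b : D, b ∉ Q ∧ (1 : FractionRing D) * φ b = φ a := by
      intro Q hQ
      exact ⟨1, 1, (Ideal.ne_top_iff_one Q).mp hQ.1.ne_top, by rw [one_mul]⟩
    have hmul : ∀ Q : Ideal D, HeightOnePrime D Q → ∀ x y : FractionRing D,
        (∃ a b : D, b ∉ Q ∧ x * φ b = φ a) → (∃ a b : D, b ∉ Q ∧ y * φ b = φ a) →
        (∃ a b : D, b ∉ Q ∧ (x * y) * φ b = φ a) := by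
      intro Q hQ x y ⟨a1, b1, hb1, hab1⟩ ⟨a2, b2, hb2, hab2⟩
      refine ⟨a1 * a2, b1 * b2, fun hmem => ?_, ?_⟩
      · rcases hQ.1.mem_or_mem hmem with h | h
        · exact hb1 h
        · exact hb2 h
      · rw [map_mul, map_mul, show x * y * (φ b1 * φ b2) = (x * φ b1) * (y * φ b2) by ring,
          hab1, hab2]
    -- d j * π^e lies in D
    have hxD : ∀ j, ∃ δ : D, d j * (φ π) ^ e = φ δ := by
      intro j
      apply hint
      intro Q hQ
      have hx : d j * (φ π) ^ e = ∏ j' ∈ Finset.univ.erase j, (d j')⁻¹ := by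
        have h2 : (∏ j' ∈ Finset.univ.erase j, d j') ≠ 0 :=
          Finset.prod_ne_zero_iff.mpr fun j' _ => hdne j'
        have h1 : d j * (φ π) ^ e * ∏ j' ∈ Finset.univ.erase j, d j' = 1 := by
          calc d j * (φ π) ^ e * ∏ j' ∈ Finset.univ.erase j, d j'
              = (d j * ∏ j' ∈ Finset.univ.erase j, d j') * (φ π) ^ e := by ring
            _ = (∏ j', d j') * (φ π) ^ e := by
                rw [Finset.mul_prod_erase _ _ (Finset.mem_univ j)]
            _ = 1 := hdprod
        rw [Finset.prod_inv_distrib]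
        exact eq_inv_of_mul_eq_one_left (by linear_combination h1)
      rw [hx]
      exact Finset.prod_induction _ (fun x => ∃ a b : D, b ∉ Q ∧ x * φ b = φ a)
        (hmul Q hQ) (hone Q hQ) (fun j' _ => hcQ Q hQ j')
    choose δ hδ using hxD
    have hδprod : ∏ j, δ j = π ^ (e * m') := by
      apply hinj
      rw [map_prod, map_pow]
      calc ∏ j, φ (δ j) = ∏ j, (d j * (φ π) ^ e) :=
            Finset.prod_congr rfl fun j _ => (hδ j).symm
        _ = (∏ j, d j) * ((φ π) ^ e) ^ (m' + 1) := by
            rw [Finset.prod_mul_distrib, Finset.prod_const, Finset.card_univ, Fintype.card_fin]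
        _ = ((∏ j, d j) * (φ π) ^ e) * ((φ π) ^ e) ^ m' := by rw [pow_succ]; ring
        _ = ((φ π) ^ e) ^ m' := by rw [hdprod, one_mul]
        _ = φ π ^ (e * m') := by rw [← pow_mul]
    have hdvd : ∀ j, δ j ∣ π ^ (e * m') :=
      fun j => hδprod ▸ Finset.dvd_prod_of_mem δ (Finset.mem_univ j)
    have hassoc : ∀ j, ∃ k ≤ e * m', Associated (δ j) (π ^ k) :=
      fun j => (dvd_prime_pow hπ _).mp (hdvd j)
    choose k hkle hka using hassoc
    choose u hu using fun j => (hka j).symm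
    -- hu j : π ^ (k j) * (u j : D) = δ j
    have hksum : ∑ j, k j = e * m' := by
      have huu : IsUnit (∏ j, (u j : D)) := by
        refine IsUnit.of_mul_eq_one (∏ j, ((u j)⁻¹ : Dˣ)) ?_
        rw [← Finset.prod_mul_distrib]
        rw [Finset.prod_congr rfl fun j (_ : j ∈ Finset.univ) => (u j).mul_inv]
        exact Finset.prod_const_one
      refine unit_mul_pow_eq_pow hπ huu ?_
      calc (∏ j, (u j : D)) * π ^ (∑ j, k j)
          = (∏ j, (u j : D)) * ∏ j, π ^ (k j) := by rw [← Finset.prod_pow_eq_pow_sum]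
        _ = ∏ j, (π ^ (k j) * (u j : D)) := by rw [Finset.prod_mul_distrib]; exact mul_comm _ _
        _ = ∏ j, δ j := Finset.prod_congr rfl fun j _ => hu j
        _ = π ^ (e * m') := hδprod
    -- transfer: d j * (φ π)^e = (φ π)^(k j) * φ (u j)
    have hdj : ∀ j, d j * (φ π) ^ e = (φ π) ^ (k j) * φ ((u j : D)) := by
      intro j
      rw [hδ j, ← hu j, map_mul, map_pow]
    -- b over Q helper
    have hbof : ∀ (j : Fin (m' + 1)) (a b : D), (d j)⁻¹ * φ b = φ a → φ b = d j * φ a := by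
      intro j a b hab
      rw [← hab, ← mul_assoc, mul_inv_cancel₀ (hdne j), one_mul]
    -- k j ≤ e
    obtain ⟨Qπ, hQπ1, hπQ⟩ := lemE π hπ.ne_zero hπ.not_unit
    have hkle_e : ∀ j, k j ≤ e := by
      intro j
      by_contra hlt
      push_neg at hlt
      have hdjeq : d j = φ ((u j : D)) * (φ π) ^ (k j - e) := by
        apply mul_right_cancel₀ hpowne
        rw [hdj j]
        calc (φ π) ^ (k j) * φ ((u j : D))
            = φ ((u j : D)) * ((φ π) ^ (k j - e) * (φ π) ^ e) := by
              rw [← pow_add, Nat.sub_add_cancel hlt.le]; ring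
          _ = φ ((u j : D)) * (φ π) ^ (k j - e) * (φ π) ^ e := by ring
      obtain ⟨a, b, hbQ, hab⟩ := hcQ Qπ hQπ1 j
      have hb := hbof j a b hab
      have hbD : b = (u j : D) * π ^ (k j - e) * a := by
        apply hinj
        rw [hb, hdjeq, map_mul, map_mul, map_pow]
      apply hbQ
      rw [hbD]
      have hpmem : π ^ (k j - e) ∈ Qπ := by
        obtain ⟨n, hn⟩ : ∃ n, k j - e = n + 1 := ⟨k j - e - 1, by omega⟩
        rw [hn, pow_succ]
        exact Ideal.mul_mem_left _ _ hπQ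
      exact Ideal.mul_mem_right a _ (Ideal.mul_mem_left _ _ hpmem)
    -- the sum of the e' j
    have hesum : ∑ j, (e - k j) = e := by
      have h1 : ∑ j, ((e - k j) + k j) = ∑ _j : Fin (m' + 1), e :=
        Finset.sum_congr rfl fun j _ => by rw [Nat.sub_add_cancel (hkle_e j)]
      rw [Finset.sum_add_distrib, hksum, Finset.sum_const, Finset.card_univ,
        Fintype.card_fin, smul_eq_mul] at h1
      have h2 : (m' + 1) * e = e * m' + e := by ring
      rw [h2] at h1
      have h3 : ∑ j, (e - k j) + e * m' = e + e * m' := by rw [h1, Nat.add_comm]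
      exact Nat.add_right_cancel h3
    -- the key constant identity
    have hkey : ∀ j, d j * (φ π) ^ (e - k j) = φ ((u j : D)) := by
      intro j
      apply mul_left_cancel₀ (pow_ne_zero (k j) hπK)
      calc (φ π) ^ (k j) * (d j * (φ π) ^ (e - k j))
          = d j * ((φ π) ^ (k j) * (φ π) ^ (e - k j)) := by ring
        _ = d j * (φ π) ^ e := by rw [← pow_add, Nat.add_sub_cancel' (hkle_e j)]
        _ = (φ π) ^ (k j) * φ ((u j : D)) := hdj j
    -- nonemptiness of the t j
    have hne : ∀ j, (t j).Nonempty := by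
      intro j
      rw [Finset.nonempty_iff_ne_empty]
      intro hempty
      have hgj : (g j : Polynomial (FractionRing D)) = C (d j) := by
        rw [hgf j, hempty, Finset.prod_empty, mul_one]
      obtain ⟨r0, hr0⟩ := hval j 0
      rw [hgj, Polynomial.eval_C] at hr0
      have hdjr : d j = φ r0 := hr0.symm
      by_cases hu0 : IsUnit r0
      · apply hnonunit j
        obtain ⟨v, hv⟩ := hu0
        have hinvmem : (C (φ (((v⁻¹ : Dˣ) : D))) : Polynomial (FractionRing D)) ∈
            IntPolySubring D (FractionRing D) := by
          rw [mem_intPoly_iff]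
          intro a
          exact ⟨((v⁻¹ : Dˣ) : D), by rw [Polynomial.eval_C]⟩
        refine IsUnit.of_mul_eq_one (⟨_, hinvmem⟩ : IntPolySubring D (FractionRing D)) ?_
        apply Subtype.ext
        push_cast
        rw [hgj, hdjr, ← hv, ← C_mul, ← map_mul, Units.mul_inv, map_one, C_1]
      · have hr00 : r0 ≠ 0 := by
          intro h0
          exact (hdne j) (by rw [hdjr, h0, map_zero])
        obtain ⟨Q, hQ1, hrQ⟩ := lemE r0 hr00 hu0
        obtain ⟨a, b, hbQ, hab⟩ := hcQ Q hQ1 j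
        have hb := hbof j a b hab
        have hbD : b = r0 * a := by
          apply hinj
          rw [hb, hdjr, map_mul]
        exact hbQ (hbD ▸ Ideal.mul_mem_right _ _ hrQ)
    -- assemble
    refine ⟨t, fun j => e - k j, u, hne, fun i => hpart i (Finset.mem_univ i), hesum, ?_⟩
    intro j
    rw [hgf j, mul_right_comm, ← C_mul, hkey j]
end

section
/- Let D be a unique factorization domain. If the residue field D/P is infinite for every height-one prime ideal P of D, then Int(D) = D[X] and Int(D) is a unique factorization domain. -/
open Polynomial

/-- In a UFD, the span of a prime element is a height-one prime. -/
lemma heightOne_span_of_prime {D : Type*} [CommRing D] [IsDomain D]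
    [UniqueFactorizationMonoid D] {p : D} (hp : Prime p) :
    HeightOnePrime D (Ideal.span {p}) := by
  refine ⟨(Ideal.span_singleton_prime hp.ne_zero).2 hp, ?_, ?_⟩
  · simp [Ideal.span_singleton_eq_bot, hp.ne_zero]
  · intro Q hQ hQlt
    by_contra hne
    obtain ⟨r, hrQ, hr⟩ := hQ.exists_mem_prime_of_ne_bot hne
    have hrp : p ∣ r := by
      have := hQlt.le hrQ
      rwa [Ideal.mem_span_singleton] at this
    have : Associated p r := (hp.irreducible.associated_of_dvd hr.irreducible hrp)
    have hpQ : p ∈ Q := by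
      obtain ⟨u, hu⟩ := this.symm
      rw [← hu]; exact Ideal.mul_mem_right _ _ hrQ
    exact absurd (Ideal.span_singleton_le_iff_mem Q |>.2 hpQ) (not_le_of_gt hQlt)

lemma prime_dvd_coeffs {D : Type*} [CommRing D] [IsDomain D]
    [UniqueFactorizationMonoid D]
    (hres : ∀ P : Ideal D, HeightOnePrime D P → Infinite (D ⧸ P))
    {p : D} (hp : Prime p) (g : D[X]) (h : ∀ a : D, p ∣ g.eval a) :
    ∀ i, p ∣ g.coeff i := by
  set P := Ideal.span {p} with hP
  haveI : P.IsPrime := (Ideal.span_singleton_prime hp.ne_zero).2 hp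
  haveI : Infinite (D ⧸ P) := hres P (heightOne_span_of_prime hp)
  set φ := Ideal.Quotient.mk P
  have hmap : g.map φ = 0 := by
    apply Polynomial.eq_zero_of_infinite_isRoot
    have : {x : D ⧸ P | IsRoot (g.map φ) x} = Set.univ := by
      ext y
      simp only [Set.mem_setOf_eq, Set.mem_univ, iff_true]
      obtain ⟨a, rfl⟩ := Ideal.Quotient.mk_surjective y
      show (g.map φ).eval (φ a) = 0
      rw [Polynomial.eval_map, Polynomial.eval₂_hom, ← RingHom.mem_ker,
        Ideal.mk_ker]
      exact Ideal.mem_span_singleton.2 (h a)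
    rw [this]
    exact Set.infinite_univ
  intro i
  have := Polynomial.coeff_map φ i ▸ congrArg (fun q => Polynomial.coeff q i) hmap
  simp only [Polynomial.coeff_zero] at this
  rw [← Ideal.mem_span_singleton, ← hP]
  rw [← Ideal.Quotient.eq_zero_iff_mem]
  rw [← Polynomial.coeff_map φ i, hmap, Polynomial.coeff_zero]

lemma dvd_coeffs_of_dvd_eval {D : Type*} [CommRing D] [IsDomain D]
    [UniqueFactorizationMonoid D]
    (hres : ∀ P : Ideal D, HeightOnePrime D P → Infinite (D ⧸ P))
    (d : D) : d ≠ 0 → ∀ g : D[X], (∀ a : D, d ∣ g.eval a) → ∀ i, d ∣ g.coeff i := by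
  induction d using UniqueFactorizationMonoid.induction_on_prime with
  | h₁ => intro h; exact absurd rfl h
  | h₂ u hu =>
    intro _ g _ i
    exact hu.dvd
  | h₃ a p ha hp ih =>
    intro _ g hg i
    have hpd : ∀ x, p ∣ g.eval x := fun x => (dvd_mul_right p a).trans (hg x)
    have hc : ∀ j, p ∣ g.coeff j := prime_dvd_coeffs hres hp g hpd
    obtain ⟨g', rfl⟩ := (Polynomial.C_dvd_iff_dvd_coeff p g).2 hc
    have : ∀ x : D, a ∣ g'.eval x := by
      intro x
      have := hg x
      rw [Polynomial.eval_mul, Polynomial.eval_C] at this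
      exact (mul_dvd_mul_iff_left hp.ne_zero).1 this
    have := ih ha g' this i
    rw [Polynomial.coeff_C_mul]
    exact mul_dvd_mul_left p this

/-- If `D` is a UFD all of whose height-one primes have infinite residue ring, then
`Int(D) = D[X]` (as subrings of `K[X]`) and `Int(D)` is a UFD. -/
theorem stmt12 (D : Type*) [CommRing D] [IsDomain D] [UniqueFactorizationMonoid D]
    (hres : ∀ P : Ideal D, HeightOnePrime D P → Infinite (D ⧸ P)) :
    IntPolySubring D (FractionRing D) =
      (Polynomial.mapRingHom (algebraMap D (FractionRing D))).range ∧
    UniqueFactorizationMonoid (IntPolySubring D (FractionRing D)) := by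
  set K := FractionRing D
  have halg : Function.Injective (algebraMap D K) := IsFractionRing.injective D K
  have key : IntPolySubring D K = (Polynomial.mapRingHom (algebraMap D K)).range := by
    ext f
    simp only [IntPolySubring, Subring.mem_iInf, Subring.mem_comap,
      Polynomial.coe_evalRingHom, RingHom.mem_range]
    constructor
    · intro hf
      obtain ⟨⟨d, hd⟩, hdf⟩ := IsLocalization.integerNormalization_map_to_map
        (nonZeroDivisors D) f
      set g := IsLocalization.integerNormalization (nonZeroDivisors D) f with hgdef
      have hd0 : d ≠ 0 := nonZeroDivisors.ne_zero hd
      have hdvd : ∀ a : D, d ∣ g.eval a := by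
        intro a
        obtain ⟨c, hc⟩ := hf a
        have : algebraMap D K (g.eval a) = algebraMap D K (d * c) := by
          rw [← Polynomial.eval₂_at_apply, ← Polynomial.eval_map, hdf]
          simp only [map_mul, Algebra.smul_def, Polynomial.eval_mul]
          rw [Polynomial.algebraMap_apply, Polynomial.eval_C, hc]
        exact ⟨c, halg this⟩
      obtain ⟨g', hg'⟩ := (Polynomial.C_dvd_iff_dvd_coeff d g).2
        (dvd_coeffs_of_dvd_eval hres d hd0 g hdvd)
      refine ⟨g', ?_⟩
      have h1 : Polynomial.map (algebraMap D K) g = Polynomial.C (algebraMap D K d) * Polynomial.map (algebraMap D K) g' := by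
        rw [hg', Polynomial.map_mul, Polynomial.map_C]
      rw [hdf] at h1
      have h2 : (d : D) • f = Polynomial.C (algebraMap D K d) * f := by
        rw [Algebra.smul_def, Polynomial.algebraMap_apply]
      rw [h2] at h1
      have hC : Polynomial.C (algebraMap D K d) ≠ 0 := by
        simp only [ne_eq, Polynomial.C_eq_zero]
        exact fun h => hd0 (halg (by simpa using h))
      exact (mul_left_cancel₀ hC h1).symm
    · rintro ⟨g, rfl⟩ a
      refine ⟨g.eval a, ?_⟩
      rw [Polynomial.coe_mapRingHom, Polynomial.eval_map, Polynomial.eval₂_at_apply]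
  refine ⟨key, ?_⟩
  rw [key]
  have hinj : Function.Injective (Polynomial.mapRingHom (algebraMap D K)) :=
    Polynomial.map_injective _ halg
  have e : D[X] ≃+* (Polynomial.mapRingHom (algebraMap D K)).range :=
    RingEquiv.ofLeftInverse (Function.leftInverse_invFun hinj)
  exact e.toMulEquiv.uniqueFactorizationMonoid inferInstance
end

section
/- Let D be a Krull domain with a prime element π such that D/πD is finite, with normalized valuation v at πD. Fix n ≥ 2 and a residue class R = r + πD of D modulo πD. Then there exist infinitely many pairwise non-associated (over K) polynomials F ∈ D[X] of degree n, irreducible over the quotient field K, such that min{v(F(a)) : a ∈ R} = n and v(F(a)) = 0 for all a ∈ D \ R. -/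
open Polynomial

section Aux

variable {D : Type*} [CommRing D] [IsDomain D]

/-- The span of a prime element is a height-one prime in a Krull domain. -/
lemma spanPi_heightOne (hD : IsKrullDomain D) {π : D} (hπ : Prime π) :
    HeightOnePrime D (Ideal.span {π}) := by
  have hinj : Function.Injective (algebraMap D (FractionRing D)) :=
    IsFractionRing.injective D (FractionRing D)
  have hπ0 : (algebraMap D (FractionRing D)) π ≠ 0 := by
    intro h
    exact hπ.ne_zero (hinj (by simpa using h))
  have hex : ∃ P : Ideal D, HeightOnePrime D P ∧ π ∈ P := by
    by_contra h
    push_neg at h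
    obtain ⟨d, hd⟩ := hD.2.2 ((algebraMap D (FractionRing D)) π)⁻¹ (by
      intro P hP
      exact ⟨1, π, h P hP, by rw [map_one, inv_mul_cancel₀ hπ0]⟩)
    apply hπ.not_isUnit
    refine IsUnit.of_mul_eq_one d ?_
    apply hinj
    rw [map_mul, map_one, ← hd, mul_inv_cancel₀ hπ0]
  obtain ⟨P, hP, hπP⟩ := hex
  have hle : Ideal.span {π} ≤ P := by rwa [Ideal.span_le, Set.singleton_subset_iff]
  have hprime : (Ideal.span {π}).IsPrime := (Ideal.span_singleton_prime hπ.ne_zero).mpr hπ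
  rcases lt_or_eq_of_le hle with h | h
  · exact absurd (hP.2.2 _ hprime h) (by
      simpa [Ideal.span_singleton_eq_bot] using hπ.ne_zero)
  · rwa [h]

lemma eq_zero_of_forall_pow_dvd (hD : IsKrullDomain D) {π : D} (hπ : Prime π)
    {s : D} (hs : ∀ m : ℕ, π ^ m ∣ s) : s = 0 := by
  have hP := spanPi_heightOne hD hπ
  haveI : (Ideal.span {π}).IsPrime := hP.1
  haveI hdvr : IsDiscreteValuationRing (Localization.AtPrime (Ideal.span {π})) := hD.1 _ hP
  set L := Localization.AtPrime (Ideal.span {π}) with hL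
  have hinj : Function.Injective (algebraMap D L) :=
    IsLocalization.injective (M := (Ideal.span {π}).primeCompl) L
      (Ideal.primeCompl_le_nonZeroDivisors _)
  by_contra hs0
  have hs0' : algebraMap D L s ≠ 0 := fun h => hs0 (hinj (by simpa using h))
  have hπu : ¬IsUnit (algebraMap D L π) := by
    intro hu
    have : algebraMap D L π ∈ IsLocalRing.maximalIdeal L := by
      rw [← Localization.AtPrime.map_eq_maximalIdeal (I := Ideal.span {π})]
      exact Ideal.mem_map_of_mem _ (Ideal.mem_span_singleton_self π)
    exact (IsLocalRing.maximalIdeal.isMaximal L).ne_top (Ideal.eq_top_of_isUnit_mem _ this hu)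
  obtain ⟨m, hm⟩ := FiniteMultiplicity.of_not_isUnit hπu hs0'
  exact hm (by simpa [map_pow] using map_dvd (algebraMap D L) (hs (m+1)))

lemma krull_isIntegrallyClosed (hD : IsKrullDomain D) : IsIntegrallyClosed D := by
  rw [isIntegrallyClosed_iff (FractionRing D)]
  intro x hx
  have key : ∃ d, x = algebraMap D (FractionRing D) d := by
    apply hD.2.2
    intro P hP
    haveI : P.IsPrime := hP.1
    haveI : IsDiscreteValuationRing (Localization.AtPrime P) := hD.1 P hP
    have hx' : IsIntegral (Localization.AtPrime P) x := hx.tower_top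
    obtain ⟨y, hy⟩ := IsIntegrallyClosed.isIntegral_iff.mp hx'
    obtain ⟨⟨a, b⟩, hab⟩ := IsLocalization.surj P.primeCompl y
    refine ⟨a, b, b.2, ?_⟩
    have := congrArg (algebraMap (Localization.AtPrime P) (FractionRing D)) hab
    rw [map_mul] at this
    rw [hy, ← IsScalarTower.algebraMap_apply, ← IsScalarTower.algebraMap_apply] at this
    exact this
  obtain ⟨d, hd⟩ := key
  exact ⟨d, hd.symm⟩

lemma eisen_irred {π w : D} (hπ : Prime π) (hw : ¬ π ∣ w) {n : ℕ} (hn : 2 ≤ n) :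
    Irreducible ((X : D[X]) ^ n + C (π * w)) := by
  set H : D[X] := X ^ n + C (π * w) with hH
  have hn0 : 0 < n := lt_of_lt_of_le two_pos hn
  have hmon : H.Monic := by
    apply (monic_X_pow n).add_of_left
    exact lt_of_le_of_lt (degree_C_le) (by simpa [degree_X_pow] using hn0)
  have hdeg : H.degree = n := by
    rw [hH, degree_add_eq_left_of_degree_lt, degree_X_pow]
    exact lt_of_le_of_lt (degree_C_le) (by simpa [degree_X_pow] using hn0)
  have hprime : (Ideal.span {π}).IsPrime := (Ideal.span_singleton_prime hπ.ne_zero).mpr hπ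
  refine irreducible_of_eisenstein_criterion hprime ?_ ?_ ?_ ?_ hmon.isPrimitive
  · rw [hmon.leadingCoeff, Ideal.mem_span_singleton]
    exact fun h => hπ.not_isUnit (isUnit_of_dvd_one h)
  · intro i hi
    rw [hdeg, Nat.cast_lt] at hi
    have : H.coeff i = if i = 0 then π * w else 0 := by
      rw [hH, coeff_add, coeff_X_pow, if_neg (Nat.ne_of_lt hi), coeff_C, zero_add]
    rw [this]
    split
    · exact Ideal.mem_span_singleton.mpr ⟨w, rfl⟩
    · exact Ideal.zero_mem _
  · rw [hdeg]; exact_mod_cast hn0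
  · rw [Ideal.span_singleton_pow, Ideal.mem_span_singleton]
    intro h
    rw [hH, coeff_add, coeff_X_pow, if_neg (by omega), zero_add, coeff_C_zero] at h
    obtain ⟨c, hc⟩ := h
    apply hw
    refine ⟨c, ?_⟩
    have := hc
    rw [pow_two, mul_assoc] at this
    exact mul_left_cancel₀ hπ.ne_zero this

noncomputable def linSub {K : Type*} [Field K] (a b : K) : K[X] →ₐ[K] K[X] := aeval (C a * X + C b)

lemma linSub_comp {K : Type*} [Field K] (a b : K) (ha : a ≠ 0) :
    (linSub a b).comp (linSub a⁻¹ (-(a⁻¹ * b))) = AlgHom.id K K[X] := by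
  apply Polynomial.algHom_ext
  simp only [linSub, AlgHom.coe_comp, Function.comp_apply, map_add, map_mul, aeval_C, aeval_X,
    AlgHom.coe_id, id_eq, algebraMap_eq]
  rw [mul_add, ← mul_assoc, ← C_mul, inv_mul_cancel₀ ha, map_neg, C_mul, C_1]
  ring

lemma linSub_irreducible_iff {K : Type*} [Field K] (a b : K) (ha : a ≠ 0) (p : K[X]) :
    Irreducible (linSub a b p) ↔ Irreducible p := by
  have h2 : (linSub a⁻¹ (-(a⁻¹ * b))).comp (linSub a b) = AlgHom.id K K[X] := by
    have := linSub_comp a⁻¹ (-(a⁻¹*b)) (inv_ne_zero ha)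
    convert this using 3 <;> field_simp
  let e : K[X] ≃ₐ[K] K[X] := AlgEquiv.ofAlgHom (linSub a b) (linSub a⁻¹ (-(a⁻¹ * b)))
    (linSub_comp a b ha) h2
  exact MulEquiv.irreducible_iff (e : K[X] ≃* K[X])

lemma F_irred (hIC : IsIntegrallyClosed D) {π w : D} (hπ : Prime π) (hw : ¬ π ∣ w)
    {n : ℕ} (hn : 2 ≤ n) (r : D) :
    Irreducible (((X - C r) ^ n + C (π ^ (n + 1) * w)).map (algebraMap D (FractionRing D))) := by
  set K := FractionRing D
  set φ := algebraMap D K with hφ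
  have hπK : φ π ≠ 0 := by
    simpa using (map_ne_zero_iff φ (IsFractionRing.injective D K)).mpr hπ.ne_zero
  have hn0 : 0 < n := lt_of_lt_of_le two_pos hn
  have hmon : ((X : D[X]) ^ n + C (π * w)).Monic := by
    apply (monic_X_pow n).add_of_left
    exact lt_of_le_of_lt (degree_C_le) (by simpa [degree_X_pow] using hn0)
  have hH : Irreducible (((X : D[X]) ^ n + C (π * w)).map φ) :=
    (hmon.irreducible_iff_irreducible_map_fraction_map).mp (eisen_irred hπ hw hn)
  have key : linSub (φ π) (φ r) (((X - C r) ^ n + C (π ^ (n + 1) * w)).map φ)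
      = C ((φ π) ^ n) * (((X : D[X]) ^ n + C (π * w)).map φ) := by
    simp only [linSub, Polynomial.map_add, Polynomial.map_pow, Polynomial.map_sub,
      Polynomial.map_mul, map_X, map_C, map_add, map_pow, map_sub, map_mul, aeval_X, aeval_C,
      algebraMap_eq]
    rw [add_sub_cancel_right, mul_pow, ← C_pow, mul_add, ← C_mul, ← C_mul]
    rw [← C_pow, ← C_mul]
    congr 1
    congr 1
    ring
  rw [← linSub_irreducible_iff (φ π) (φ r) hπK, key]
  exact (irreducible_isUnit_mul (isUnit_C.mpr (IsUnit.pow n (isUnit_iff_ne_zero.mpr hπK)))).mpr hH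

end Aux

/-- For a Krull domain `D` with prime element `π`, finite residue ring `D/πD`, normalized
valuation `v` at `πD`, `n ≥ 2` and a residue class `R = r + πD`, there exist infinitely
many pairwise non-associated (over `K`) polynomials `F ∈ D[X]` of degree `n`, irreducible
over `K`, with `min {v(F(a)) : a ∈ R} = n` and `v(F(a)) = 0` for all `a ∈ D \ R`. -/
theorem stmt15 (D : Type*) [CommRing D] [IsDomain D] (hD : IsKrullDomain D)
    (π : D) (hπ : Prime π) (hfin : Finite (D ⧸ Ideal.span {π}))
    (v : FractionRing D → ℤ)
    (hv_mul : ∀ x y : FractionRing D, x ≠ 0 → y ≠ 0 → v (x * y) = v x + v y)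
    (hv_char : ∀ d : D, d ≠ 0 → ∀ m : ℕ,
      (v (algebraMap D (FractionRing D) d) = (m : ℤ) ↔ π ^ m ∣ d ∧ ¬ π ^ (m + 1) ∣ d))
    (n : ℕ) (hn : 2 ≤ n) (r : D) :
    ∃ T : Set (Polynomial D), T.Infinite ∧
      (∀ F ∈ T, F.natDegree = n ∧
        Irreducible (F.map (algebraMap D (FractionRing D))) ∧
        (∀ a : D, a - r ∈ Ideal.span {π} →
          (n : ℤ) ≤ v (algebraMap D (FractionRing D) (F.eval a))) ∧
        (∃ a : D, a - r ∈ Ideal.span {π} ∧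
          v (algebraMap D (FractionRing D) (F.eval a)) = (n : ℤ)) ∧
        (∀ a : D, a - r ∉ Ideal.span {π} →
          v (algebraMap D (FractionRing D) (F.eval a)) = 0)) ∧
      (∀ F ∈ T, ∀ G ∈ T, F ≠ G →
        ¬ Associated (F.map (algebraMap D (FractionRing D)))
            (G.map (algebraMap D (FractionRing D)))) := by
  classical
  haveI hIC : IsIntegrallyClosed D := krull_isIntegrallyClosed hD
  set φ := algebraMap D (FractionRing D) with hφ
  have hinj : Function.Injective φ := IsFractionRing.injective D (FractionRing D)
  have hπ0 : π ≠ 0 := hπ.ne_zero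
  have hn0 : 0 < n := lt_of_lt_of_le two_pos hn
  -- valuation lemmas
  have v_map_eq : ∀ (s : D) (m : ℕ), π ^ m ∣ s → ¬ π ^ (m + 1) ∣ s → v (φ s) = m := by
    intro s m h1 h2
    have hs : s ≠ 0 := fun h0 => h2 (h0 ▸ dvd_zero _)
    exact (hv_char s hs m).mpr ⟨h1, h2⟩
  have v_nonneg : ∀ s : D, s ≠ 0 → 0 ≤ v (φ s) := by
    intro s hs
    have hex : ∃ m : ℕ, ¬ π ^ m ∣ s := by
      by_contra h
      push_neg at h
      exact hs (eq_zero_of_forall_pow_dvd hD hπ h)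
    obtain ⟨m, hm1, hm2⟩ : ∃ m : ℕ, π ^ m ∣ s ∧ ¬ π ^ (m + 1) ∣ s := by
      have hfind := Nat.find_spec hex
      set m := Nat.find hex with hmdef
      have hm0 : m ≠ 0 := by
        intro h
        rw [h] at hfind
        exact hfind (by simp)
      obtain ⟨k, hk⟩ := Nat.exists_eq_succ_of_ne_zero hm0
      refine ⟨k, ?_, by rw [← Nat.succ_eq_add_one, ← hk]; exact hfind⟩
      have := Nat.find_min hex (m := k) (by omega)
      exact not_not.mp this
    rw [v_map_eq s m hm1 hm2]
    exact Int.ofNat_nonneg m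
  have vπpow : ∀ m : ℕ, v (φ (π ^ m)) = m := by
    intro m
    apply v_map_eq
    · exact dvd_rfl
    · intro h
      obtain ⟨c, hc⟩ := h
      rw [pow_succ, mul_assoc] at hc
      nth_rewrite 1 [← mul_one (π ^ m)] at hc
      exact hπ.not_isUnit (IsUnit.of_mul_eq_one c (mul_left_cancel₀ (pow_ne_zero m hπ0) hc).symm)
  have v_pow_mul : ∀ (m : ℕ) (s : D), s ≠ 0 → v (φ (π ^ m * s)) = m + v (φ s) := by
    intro m s hs
    rw [map_mul, hv_mul _ _ (by
        simpa using (map_ne_zero_iff φ hinj).mpr (pow_ne_zero m hπ0))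
      ((map_ne_zero_iff φ hinj).mpr hs), vπpow]
  -- the family
  set Fd : D → D[X] := fun d => (X - C r) ^ n + C (π ^ (n + 1) * (1 + π * d)) with hFd
  have hwnd : ∀ d : D, ¬ π ∣ (1 + π * d) := by
    intro d hdvd
    have : π ∣ 1 := (dvd_add_right ⟨d, rfl⟩).mp (by rwa [add_comm])
    exact hπ.not_isUnit (isUnit_of_dvd_one this)
  have hFmon : ∀ d : D, (Fd d).Monic := by
    intro d
    apply ((monic_X_sub_C r).pow n).add_of_left
    have : ((X - C r) ^ n).degree = (n : WithBot ℕ) := by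
      rw [degree_pow, degree_X_sub_C, nsmul_eq_mul, mul_one]
    rw [this]
    exact lt_of_le_of_lt (degree_C_le) (by exact_mod_cast Nat.cast_pos.mpr hn0)
  have hFdeg : ∀ d : D, (Fd d).natDegree = n := by
    intro d
    have hd : (Fd d).degree = n := by
      rw [hFd]
      simp only
      rw [degree_add_eq_left_of_degree_lt, degree_pow, degree_X_sub_C, nsmul_eq_mul, mul_one]
      rw [degree_pow, degree_X_sub_C, nsmul_eq_mul, mul_one]
      exact lt_of_le_of_lt (degree_C_le) (by exact_mod_cast Nat.cast_pos.mpr hn0)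
    exact natDegree_eq_of_degree_eq_some hd
  have hFirr : ∀ d : D, Irreducible ((Fd d).map φ) := fun d =>
    F_irred hIC hπ (hwnd d) hn r
  have hFeval : ∀ d a : D, (Fd d).eval a = (a - r) ^ n + π ^ (n + 1) * (1 + π * d) := by
    intro d a
    simp [hFd]
  have hnoroot : ∀ d a : D, (Fd d).eval a ≠ 0 := by
    intro d a h
    have hroot : ((Fd d).map φ).eval (φ a) = 0 := by
      rw [eval_map, eval₂_hom, h, map_zero]
    have hdvd : (X - C (φ a)) ∣ (Fd d).map φ := dvd_iff_isRoot.mpr hroot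
    obtain ⟨q, hq⟩ := hdvd
    rcases (hFirr d).isUnit_or_isUnit hq with hu | hu
    · exact (not_isUnit_of_natDegree_pos _ (by simp [natDegree_X_sub_C])) hu
    · obtain ⟨c, hc, hcq⟩ := (Polynomial.isUnit_iff).mp hu
      have hdegmap : ((Fd d).map φ).natDegree = n := by
        rw [(hFmon d).natDegree_map]
        exact hFdeg d
      rw [hq, ← hcq, natDegree_mul (X_sub_C_ne_zero _) (by
          intro h0
          exact hc.ne_zero (by simpa using h0)), natDegree_X_sub_C,
        natDegree_C] at hdegmap
      omega
  refine ⟨Set.range Fd, ?_, ?_, ?_⟩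
  · -- infinite
    haveI : Infinite D :=
      Infinite.of_injective (fun m : ℕ => π ^ m)
        (pow_injective_of_not_isUnit hπ.not_isUnit hπ0)
    apply Set.infinite_range_of_injective
    intro d₁ d₂ h
    have h' : C (π ^ (n + 1) * (1 + π * d₁)) = C (π ^ (n + 1) * (1 + π * d₂)) := by
      have := h
      rw [hFd] at this
      simpa using add_left_cancel this
    have h'' := C_injective h'
    have h3 := mul_left_cancel₀ (pow_ne_zero (n+1) hπ0) h''
    have h4 := add_left_cancel h3
    exact mul_left_cancel₀ hπ0 h4
  · -- properties
    rintro F ⟨d, rfl⟩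
    refine ⟨hFdeg d, hFirr d, ?_, ?_, ?_⟩
    · intro a ha
      obtain ⟨t, ht⟩ := Ideal.mem_span_singleton'.mp ha
      have heval : (Fd d).eval a = π ^ n * (t ^ n + π * (1 + π * d)) := by
        rw [hFeval, ← ht]
        ring
      have hs : t ^ n + π * (1 + π * d) ≠ 0 := by
        intro h0
        exact hnoroot d a (by rw [heval, h0, mul_zero])
      rw [heval, v_pow_mul n _ hs]
      have := v_nonneg _ hs
      omega
    · refine ⟨r + π, by simp [Ideal.mem_span_singleton], ?_⟩
      have heval : (Fd d).eval (r + π) = π ^ n * (1 + π * (1 + π * d)) := by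
        rw [hFeval]
        ring
      have hnd : ¬ π ∣ (1 + π * (1 + π * d)) := hwnd _
      have h0 : v (φ (1 + π * (1 + π * d))) = 0 := by
        have := v_map_eq (1 + π * (1 + π * d)) 0 (by simp) (by simpa using hnd)
        simpa using this
      rw [heval, v_pow_mul n _ (by
        intro h
        rw [h] at hnd
        exact hnd (dvd_zero π)), h0, add_zero]
    · intro a ha
      rw [Ideal.mem_span_singleton] at ha
      have hnd : ¬ π ∣ (Fd d).eval a := by
        rw [hFeval]
        intro hdvd
        have h1 : π ∣ (a - r) ^ n := by
          have h2 : π ∣ π ^ (n + 1) * (1 + π * d) :=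
            Dvd.dvd.mul_right (dvd_pow_self π (by omega)) _
          exact (dvd_add_right h2).mp (by rwa [add_comm])
        exact ha (hπ.dvd_of_dvd_pow h1)
      have := v_map_eq ((Fd d).eval a) 0 (by simp) (by simpa using hnd)
      simpa using this
  · -- pairwise non-associated
    rintro F ⟨d₁, rfl⟩ G ⟨d₂, rfl⟩ hne hassoc
    apply hne
    apply Polynomial.map_injective φ hinj
    exact eq_of_monic_of_associated ((hFmon d₁).map φ) ((hFmon d₂).map φ) hassoc
end
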